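/- arXiv:2101.12262 — 4 statements merged into one kernel-verified Lean document; each statement's English description precedes it below -/
import Mathlib

section
/- Let m₁, m₂ > 0, and let μ_{m₁,m₂} be the Borel probability measure on [0,1]² with density (u,v) ↦ m₁ m₂ u^{m₁−1} v^{m₂−1} with respect to Lebesgue measure (the law of independent random variables U and V with cumulative distribution functions u^{m₁} and v^{m₂} respectively). Then μ_{m₁,m₂} is a tail generating measure, and for every bivariate copula C admitting a tail dependence function Λ, λ_{μ_{m₁,m₂}}(C) = ((m₁+1)(m₂+1)/(m₁+m₂+2)) · ∫₀¹ { Λ(t,1)·t^{m₁−1} + Λ(1,t)·t^{m₂−1} } dt. In particular, for m₁ = m₂ = 1 (μ the uniform measure on [0,1]², giving tail Spearman's rho λ_S), λ_S(C) = ∫₀¹ (Λ(t,1) + Λ(1,t)) dt. -/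
open MeasureTheory Filter Set
open scoped ENNReal NNReal

/-- A bivariate copula: `C : [0,1]² → [0,1]` with the grounded/marginal conditions and
the 2-increasing property. -/
def IsCopula (C : ℝ → ℝ → ℝ) : Prop :=
  (∀ u ∈ Icc (0:ℝ) 1, ∀ v ∈ Icc (0:ℝ) 1, C u v ∈ Icc (0:ℝ) 1) ∧
  (∀ u ∈ Icc (0:ℝ) 1, C u 0 = 0 ∧ C 0 u = 0 ∧ C u 1 = u ∧ C 1 u = u) ∧
  (∀ u u' v v' : ℝ, u ∈ Icc (0:ℝ) 1 → u' ∈ Icc (0:ℝ) 1 →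
    v ∈ Icc (0:ℝ) 1 → v' ∈ Icc (0:ℝ) 1 → u ≤ u' → v ≤ v' →
    0 ≤ C u' v' - C u' v - C u v' + C u v)

/-- `Λ` is the tail dependence function of `C`:
`Λ(u,v) = lim_{p↓0} C(pu,pv)/p` for every `(u,v) ∈ [0,∞)²`. -/
def HasTDF (C Λ : ℝ → ℝ → ℝ) : Prop :=
  ∀ u v : ℝ, 0 ≤ u → 0 ≤ v →
    Tendsto (fun p : ℝ => C (p * u) (p * v) / p)
      (nhdsWithin (0:ℝ) (Ioi 0)) (nhds (Λ u v))

/-- A tail generating measure: a Borel probability measure on `[0,1]²` whose mass is not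
concentrated on `{u = 0} ∪ {v = 0}`. -/
def IsTailGenMeasure (μ : Measure (ℝ × ℝ)) : Prop :=
  IsProbabilityMeasure μ ∧
  μ ((Icc (0:ℝ) 1 ×ˢ Icc (0:ℝ) 1)ᶜ) = 0 ∧
  μ {q : ℝ × ℝ | q.1 = 0 ∨ q.2 = 0} < 1

/-- The μ-tail dependence measure: `λ_μ = (∫ Λ dμ) / (∫ min dμ)`, applied to
the tail dependence function `Λ` of the copula. -/
noncomputable def tdm (Λ : ℝ → ℝ → ℝ) (μ : Measure (ℝ × ℝ)) : ℝ :=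
  (∫ q, Λ q.1 q.2 ∂μ) / (∫ q : ℝ × ℝ, min q.1 q.2 ∂μ)

/-- The law of `(U,V)` with independent components, `U ~ Mo(m₁)`, `V ~ Mo(m₂)`:
the measure on `[0,1]²` with density `m₁ m₂ u^(m₁-1) v^(m₂-1)` w.r.t. Lebesgue measure. -/
noncomputable def polyMeasure (m₁ m₂ : ℝ) : Measure (ℝ × ℝ) :=
  (((volume : Measure ℝ).restrict (Icc 0 1)).prod
      ((volume : Measure ℝ).restrict (Icc 0 1))).withDensity
    (fun q => ENNReal.ofReal (m₁ * m₂ * q.1 ^ (m₁ - 1) * q.2 ^ (m₂ - 1)))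

section CopulaFacts

variable {C : ℝ → ℝ → ℝ} (hC : IsCopula C)

lemma h01 : (0:ℝ) ∈ Icc (0:ℝ) 1 := by norm_num
lemma h11 : (1:ℝ) ∈ Icc (0:ℝ) 1 := by norm_num

include hC in
lemma cop_nonneg {x y : ℝ} (hx : x ∈ Icc (0:ℝ) 1) (hy : y ∈ Icc (0:ℝ) 1) : 0 ≤ C x y :=
  (hC.1 x hx y hy).1

include hC in
lemma cop_le_right {x y : ℝ} (hx : x ∈ Icc (0:ℝ) 1) (hy : y ∈ Icc (0:ℝ) 1) : C x y ≤ y := by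
  have h := hC.2.2 x 1 0 y hx h11 h01 hy hx.2 hy.1
  have e1 := (hC.2.1 y hy).2.2.2  -- C 1 y = y
  have e2 := (hC.2.1 x hx).1      -- C x 0 = 0
  have e3 := (hC.2.1 (1:ℝ) h11).1 -- C 1 0 = 0
  linarith

include hC in
lemma cop_le_left {x y : ℝ} (hx : x ∈ Icc (0:ℝ) 1) (hy : y ∈ Icc (0:ℝ) 1) : C x y ≤ x := by
  have h := hC.2.2 0 x y 1 h01 hx hy h11 hx.1 hy.2
  have e1 := (hC.2.1 x hx).2.2.1  -- C x 1 = x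
  have e2 := (hC.2.1 y hy).2.1    -- C 0 y = 0
  have e3 := (hC.2.1 (1:ℝ) h11).2.1 -- C 0 1 = 0
  linarith

include hC in
lemma cop_lip {x x' y y' : ℝ} (hx : x ∈ Icc (0:ℝ) 1) (hx' : x' ∈ Icc (0:ℝ) 1)
    (hy : y ∈ Icc (0:ℝ) 1) (hy' : y' ∈ Icc (0:ℝ) 1) :
    |C x y - C x' y'| ≤ |x - x'| + |y - y'| := by
  have key1 : ∀ a a' b : ℝ, a ∈ Icc (0:ℝ) 1 → a' ∈ Icc (0:ℝ) 1 → b ∈ Icc (0:ℝ) 1 →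
      a ≤ a' → 0 ≤ C a' b - C a b ∧ C a' b - C a b ≤ a' - a := by
    intro a a' b ha ha' hb haa
    constructor
    · have h := hC.2.2 a a' 0 b ha ha' h01 hb haa hb.1
      have e1 := (hC.2.1 a ha).1
      have e2 := (hC.2.1 a' ha').1
      linarith
    · have h := hC.2.2 a a' b 1 ha ha' hb h11 haa hb.2
      have e1 := (hC.2.1 a ha).2.2.1
      have e2 := (hC.2.1 a' ha').2.2.1
      linarith
  have key2 : ∀ a b b' : ℝ, a ∈ Icc (0:ℝ) 1 → b ∈ Icc (0:ℝ) 1 → b' ∈ Icc (0:ℝ) 1 →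
      b ≤ b' → 0 ≤ C a b' - C a b ∧ C a b' - C a b ≤ b' - b := by
    intro a b b' ha hb hb' hbb
    constructor
    · have h := hC.2.2 0 a b b' h01 ha hb hb' ha.1 hbb
      have e1 := (hC.2.1 b hb).2.1
      have e2 := (hC.2.1 b' hb').2.1
      linarith
    · have h := hC.2.2 a 1 b b' ha h11 hb hb' ha.2 hbb
      have e1 := (hC.2.1 b hb).2.2.2
      have e2 := (hC.2.1 b' hb').2.2.2
      linarith
  have h1 : |C x y - C x' y| ≤ |x - x'| := by
    rcases le_total x x' with h | h
    · have := key1 x x' y hx hx' hy h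
      rw [abs_sub_comm, abs_of_nonneg this.1, abs_sub_comm]
      calc C x' y - C x y ≤ x' - x := this.2
        _ ≤ |x' - x| := le_abs_self _
    · have := key1 x' x y hx' hx hy h
      rw [abs_of_nonneg this.1]
      calc C x y - C x' y ≤ x - x' := this.2
        _ ≤ |x - x'| := le_abs_self _
  have h2 : |C x' y - C x' y'| ≤ |y - y'| := by
    rcases le_total y y' with h | h
    · have := key2 x' y y' hx' hy hy' h
      rw [abs_sub_comm, abs_of_nonneg this.1, abs_sub_comm]
      calc C x' y' - C x' y ≤ y' - y := this.2
        _ ≤ |y' - y| := le_abs_self _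
    · have := key2 x' y' y hx' hy' hy h
      rw [abs_of_nonneg this.1]
      calc C x' y - C x' y' ≤ y - y' := this.2
        _ ≤ |y - y'| := le_abs_self _
  calc |C x y - C x' y'| ≤ |C x y - C x' y| + |C x' y - C x' y'| := abs_sub_le _ _ _
    _ ≤ |x - x'| + |y - y'| := add_le_add h1 h2

end CopulaFacts

section TDF

lemma eventually_small (u v : ℝ) (hu : 0 ≤ u) (hv : 0 ≤ v) :
    ∀ᶠ p in nhdsWithin (0:ℝ) (Ioi 0),
      0 < p ∧ p * u ∈ Icc (0:ℝ) 1 ∧ p * v ∈ Icc (0:ℝ) 1 := by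
  have hδ : 0 < (max u v + 1)⁻¹ := by positivity
  filter_upwards [Ioo_mem_nhdsGT_of_mem (by exact ⟨le_refl 0, hδ⟩ :
      (0:ℝ) ∈ Ico 0 (max u v + 1)⁻¹)] with p hp
  obtain ⟨hp0, hp1⟩ := hp
  refine ⟨hp0, ⟨by positivity, ?_⟩, ⟨by positivity, ?_⟩⟩
  · have : p * u ≤ (max u v + 1)⁻¹ * (max u v + 1) := by
      apply mul_le_mul hp1.le (by linarith [le_max_left u v]) hu hδ.le
    simpa [inv_mul_cancel₀ (by positivity : max u v + 1 ≠ 0)] using this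
  · have : p * v ≤ (max u v + 1)⁻¹ * (max u v + 1) := by
      apply mul_le_mul hp1.le (by linarith [le_max_right u v]) hv hδ.le
    simpa [inv_mul_cancel₀ (by positivity : max u v + 1 ≠ 0)] using this

variable (hT : HasTDF C Λ)

include hT in
lemma tdf_homog {s u v : ℝ} (hs : 0 < s) (hu : 0 ≤ u) (hv : 0 ≤ v) :
    Λ (s * u) (s * v) = s * Λ u v := by
  have T1 := hT (s * u) (s * v) (by positivity) (by positivity)
  -- q = p * s tends to 0+ within Ioi 0
  have hmap : Tendsto (fun p : ℝ => p * s) (nhdsWithin (0:ℝ) (Ioi 0))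
      (nhdsWithin (0:ℝ) (Ioi 0)) := by
    rw [tendsto_nhdsWithin_iff]
    constructor
    · have := ((continuous_mul_right s).tendsto (0:ℝ)).mono_left
        (nhdsWithin_le_nhds (s := Ioi (0:ℝ)))
      simpa using this
    · filter_upwards [self_mem_nhdsWithin] with p hp
      exact mul_pos hp hs
  have T2 : Tendsto (fun p : ℝ => C (p * (s * u)) (p * (s * v)) / p)
      (nhdsWithin (0:ℝ) (Ioi 0)) (nhds (s * Λ u v)) := by
    have h := ((hT u v hu hv).comp hmap).const_mul s
    apply h.congr'
    filter_upwards [self_mem_nhdsWithin] with p hp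
    have hp' : (p:ℝ) ≠ 0 := ne_of_gt hp
    have hs' : s ≠ 0 := hs.ne'
    simp only [Function.comp]
    rw [mul_comm p s]
    field_simp
  exact tendsto_nhds_unique T1 T2

include hT in
lemma tdf_nonneg (hC : ∀ x y : ℝ, x ∈ Icc (0:ℝ) 1 → y ∈ Icc (0:ℝ) 1 → 0 ≤ C x y)
    {u v : ℝ} (hu : 0 ≤ u) (hv : 0 ≤ v) : 0 ≤ Λ u v := by
  refine ge_of_tendsto (hT u v hu hv) ?_
  filter_upwards [eventually_small u v hu hv] with p ⟨hp, h1, h2⟩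
  exact div_nonneg (hC _ _ h1 h2) hp.le

include hT in
lemma tdf_le_min
    (hCle : ∀ x y : ℝ, x ∈ Icc (0:ℝ) 1 → y ∈ Icc (0:ℝ) 1 → C x y ≤ x ∧ C x y ≤ y)
    {u v : ℝ} (hu : 0 ≤ u) (hv : 0 ≤ v) : Λ u v ≤ min u v := by
  refine le_of_tendsto (hT u v hu hv) ?_
  filter_upwards [eventually_small u v hu hv] with p ⟨hp, h1, h2⟩
  rw [le_min_iff]
  constructor
  · rw [div_le_iff₀ hp, mul_comm u p]
    exact (hCle _ _ h1 h2).1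
  · rw [div_le_iff₀ hp, mul_comm v p]
    exact (hCle _ _ h1 h2).2

include hT in
lemma tdf_lip
    (hlip : ∀ x x' y y' : ℝ, x ∈ Icc (0:ℝ) 1 → x' ∈ Icc (0:ℝ) 1 → y ∈ Icc (0:ℝ) 1 →
      y' ∈ Icc (0:ℝ) 1 → |C x y - C x' y'| ≤ |x - x'| + |y - y'|)
    {u v u' v' : ℝ} (hu : 0 ≤ u) (hv : 0 ≤ v) (hu' : 0 ≤ u') (hv' : 0 ≤ v') :
    |Λ u v - Λ u' v'| ≤ |u - u'| + |v - v'| := by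
  have Td : Tendsto (fun p : ℝ => |C (p*u) (p*v) / p - C (p*u') (p*v') / p|)
      (nhdsWithin (0:ℝ) (Ioi 0)) (nhds |Λ u v - Λ u' v'|) :=
    ((hT u v hu hv).sub (hT u' v' hu' hv')).abs
  refine le_of_tendsto Td ?_
  filter_upwards [eventually_small u v hu hv, eventually_small u' v' hu' hv'] with p h h'
  obtain ⟨hp, h1, h2⟩ := h
  obtain ⟨-, h1', h2'⟩ := h'
  rw [div_sub_div_same, abs_div, abs_of_pos hp, div_le_iff₀ hp]
  calc |C (p*u) (p*v) - C (p*u') (p*v')| ≤ |p*u - p*u'| + |p*v - p*v'| :=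
        hlip _ _ _ _ h1 h1' h2 h2'
    _ = (|u - u'| + |v - v'|) * p := by
        rw [← mul_sub, ← mul_sub, abs_mul, abs_mul, abs_of_pos hp]; ring

include hT in
lemma tdf_contOn
    (hlip : ∀ x x' y y' : ℝ, x ∈ Icc (0:ℝ) 1 → x' ∈ Icc (0:ℝ) 1 → y ∈ Icc (0:ℝ) 1 →
      y' ∈ Icc (0:ℝ) 1 → |C x y - C x' y'| ≤ |x - x'| + |y - y'|) :
    ContinuousOn (fun q : ℝ × ℝ => Λ q.1 q.2) (Ici (0:ℝ) ×ˢ Ici (0:ℝ)) := by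
  have : LipschitzOnWith 2 (fun q : ℝ × ℝ => Λ q.1 q.2) (Ici (0:ℝ) ×ˢ Ici (0:ℝ)) := by
    rw [lipschitzOnWith_iff_dist_le_mul]
    intro q hq r hr
    have h := tdf_lip hT hlip hq.1 hq.2 hr.1 hr.2
    rw [Real.dist_eq]
    refine h.trans ?_
    have d1 : |q.1 - r.1| ≤ dist q r := by
      rw [Prod.dist_eq]; exact le_max_of_le_left (by rw [Real.dist_eq])
    have d2 : |q.2 - r.2| ≤ dist q r := by
      rw [Prod.dist_eq]; exact le_max_of_le_right (by rw [Real.dist_eq])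
    push_cast
    linarith
  exact this.continuousOn
end TDF

noncomputable section TDMAux


/-- Lebesgue measure restricted to `[0,1]`. -/
def muI : Measure ℝ := (volume : Measure ℝ).restrict (Icc 0 1)

/-- The product of two copies of `muI`. -/
def nu2 : Measure (ℝ × ℝ) := muI.prod muI

instance : SFinite muI := by unfold muI; infer_instance
instance : IsFiniteMeasure muI := by
  constructor
  unfold muI
  rw [Measure.restrict_apply_univ]
  simp [Real.volume_Icc]

lemma sq_meas : MeasurableSet ((Icc (0:ℝ) 1) ×ˢ (Icc (0:ℝ) 1)) :=
  measurableSet_Icc.prod measurableSet_Icc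

lemma nu2_eq : nu2 = ((volume : Measure ℝ).prod volume).restrict
    ((Icc (0:ℝ) 1) ×ˢ (Icc (0:ℝ) 1)) := Measure.prod_restrict _ _

lemma ae_sq : ∀ᵐ z ∂nu2, z ∈ (Icc (0:ℝ) 1) ×ˢ (Icc (0:ℝ) 1) := by
  rw [nu2_eq]; exact ae_restrict_mem sq_meas

lemma integrable_rpow_restrict {m : ℝ} (hm : 0 < m) :
    Integrable (fun t : ℝ => t ^ (m - 1)) muI := by
  have h := intervalIntegral.intervalIntegrable_rpow' (a := 0) (b := 1)
    (by linarith : (-1:ℝ) < m - 1)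
  rw [intervalIntegrable_iff_integrableOn_Ioc_of_le zero_le_one] at h
  have : IntegrableOn (fun t : ℝ => t ^ (m - 1)) (Icc 0 1) volume := by
    rwa [integrableOn_Icc_iff_integrableOn_Ioc]
  exact this

lemma integral_rpow_restrict {m : ℝ} (hm : 0 < m) :
    ∫ t, t ^ (m - 1) ∂muI = 1 / m := by
  have h1 : ∫ t, t ^ (m-1) ∂muI = ∫ t in Icc (0:ℝ) 1, t ^ (m-1) := rfl
  rw [h1, integral_Icc_eq_integral_Ioc, ← intervalIntegral.integral_of_le zero_le_one,
    integral_rpow (Or.inl (by linarith))]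
  rw [Real.one_rpow, Real.zero_rpow (by intro h; linarith : m - 1 + 1 ≠ 0)]
  have : m - 1 + 1 = m := by ring
  rw [this]
  norm_num

lemma meas_W (m n : ℝ) : Measurable (fun z : ℝ × ℝ => m * n * z.1 ^ (m-1) * z.2 ^ (n-1)) := by
  fun_prop

lemma integrable_W {m n : ℝ} (hm : 0 < m) (hn : 0 < n) :
    Integrable (fun z : ℝ × ℝ => m * n * z.1 ^ (m-1) * z.2 ^ (n-1)) nu2 := by
  have h1 : Integrable (fun t : ℝ => m * t ^ (m-1)) muI :=
    (integrable_rpow_restrict hm).const_mul m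
  have h2 : Integrable (fun t : ℝ => n * t ^ (n-1)) muI :=
    (integrable_rpow_restrict hn).const_mul n
  exact (h1.mul_prod h2).congr (Eventually.of_forall fun z => by ring)

lemma ae_W_nonneg {m n : ℝ} :
    ∀ᵐ z ∂nu2, (0:ℝ) ≤ m * n * z.1 ^ (m-1) * z.2 ^ (n-1) ∨ True := by
  simp

lemma nu2_diag : nu2 {z : ℝ × ℝ | z.1 = z.2} = 0 := by
  have hS : MeasurableSet {z : ℝ × ℝ | z.1 = z.2} :=
    measurableSet_eq_fun measurable_fst measurable_snd
  rw [nu2, Measure.prod_apply hS]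
  have h0 : ∀ x : ℝ, muI {x} = 0 := by
    intro x
    rw [muI, Measure.restrict_apply (measurableSet_singleton x)]
    exact measure_mono_null inter_subset_left (Real.volume_singleton)
  have : ∀ x : ℝ, muI (Prod.mk x ⁻¹' {z : ℝ × ℝ | z.1 = z.2}) = 0 := by
    intro x
    have hpre : Prod.mk x ⁻¹' {z : ℝ × ℝ | z.1 = z.2} = {x} := by
      ext y; simp [eq_comm]
    rw [hpre]; exact h0 x
  simp [h0, this]

lemma muI_ae_Ioc : ∀ᵐ u ∂muI, u ∈ Ioc (0:ℝ) 1 := by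
  have : muI = (volume : Measure ℝ).restrict (Ioc 0 1) := by
    rw [muI, Measure.restrict_congr_set Ioc_ae_eq_Icc]
  rw [this]
  exact ae_restrict_mem measurableSet_Ioc

/-- Core computation: integral over the region `{v ≤ u}`. -/
lemma kernel_integral (K : ℝ → ℝ → ℝ)
    (hmeasK : AEStronglyMeasurable (fun z : ℝ × ℝ => K z.1 z.2) nu2)
    (hbd : ∀ u v : ℝ, u ∈ Icc (0:ℝ) 1 → v ∈ Icc (0:ℝ) 1 → |K u v| ≤ 1)
    (hhom : ∀ s u v : ℝ, 0 < s → 0 ≤ u → 0 ≤ v → K (s*u) (s*v) = s * K u v)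
    {m n : ℝ} (hm : 0 < m) (hn : 0 < n) :
    ∫ z, (if z.2 ≤ z.1 then K z.1 z.2 * (m * n * z.1 ^ (m-1) * z.2 ^ (n-1)) else 0) ∂nu2
      = (m * n / (m + n + 1)) * ∫ t in (0:ℝ)..1, K 1 t * t ^ (n-1) := by
  set B := ∫ t in (0:ℝ)..1, K 1 t * t ^ (n-1) with hB
  set F : ℝ × ℝ → ℝ :=
    fun z => if z.2 ≤ z.1 then K z.1 z.2 * (m * n * z.1 ^ (m-1) * z.2 ^ (n-1)) else 0 with hF
  have hWint := integrable_W hm hn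
  have hFeq : F = Set.indicator {z : ℝ × ℝ | z.2 ≤ z.1}
      (fun z => K z.1 z.2 * (m * n * z.1 ^ (m-1) * z.2 ^ (n-1))) := by
    funext z; simp [hF, Set.indicator_apply]
  have hle : MeasurableSet {z : ℝ × ℝ | z.2 ≤ z.1} :=
    measurableSet_le measurable_snd measurable_fst
  have hInt : Integrable F nu2 := by
    rw [hFeq]
    refine Integrable.mono' (g := fun z => |m * n * z.1 ^ (m-1) * z.2 ^ (n-1)|)
      hWint.abs ((hmeasK.mul (meas_W m n).aestronglyMeasurable).indicator hle) ?_
    filter_upwards [ae_sq] with z hz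
    rw [Set.indicator_apply]
    by_cases h : z ∈ {z : ℝ × ℝ | z.2 ≤ z.1}
    · simp only [h, if_pos]
      rw [Real.norm_eq_abs, abs_mul]
      calc |K z.1 z.2| * |m * n * z.1 ^ (m-1) * z.2 ^ (n-1)|
          ≤ 1 * |m * n * z.1 ^ (m-1) * z.2 ^ (n-1)| := by
            apply mul_le_mul_of_nonneg_right (hbd _ _ hz.1 hz.2) (abs_nonneg _)
        _ = |m * n * z.1 ^ (m-1) * z.2 ^ (n-1)| := one_mul _
    · simp [h, abs_nonneg]; positivity
  rw [show (∫ z, F z ∂nu2) = ∫ z, F z ∂(muI.prod muI) from rfl, integral_prod _ hInt]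
  have houter : ∀ᵐ u ∂muI, (∫ v, F (u, v) ∂muI) = (m * n * B) * u ^ (m + n) := by
    filter_upwards [muI_ae_Ioc] with u hu
    obtain ⟨hu0, hu1⟩ := hu
    -- inner integral
    set c : ℝ := u * (m * n * u ^ (m-1) * u ^ (n-1)) with hc
    have step1 : (∫ v, F (u, v) ∂muI)
        = ∫ v in Icc (0:ℝ) u, K u v * (m * n * u ^ (m-1) * v ^ (n-1)) := by
      have : (fun v => F (u, v)) = Set.indicator (Iic u)
          (fun v => K u v * (m * n * u ^ (m-1) * v ^ (n-1))) := by
        funext v; simp [hF, Set.indicator_apply, Set.mem_Iic]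
      rw [this, integral_indicator measurableSet_Iic, muI,
        Measure.restrict_restrict measurableSet_Iic]
      congr 1
      rw [show Iic u ∩ Icc (0:ℝ) 1 = Icc 0 u by
        ext x
        simp only [mem_inter_iff, mem_Iic, mem_Icc]
        constructor
        · rintro ⟨h1, h2, h3⟩; exact ⟨h2, h1⟩
        · rintro ⟨h1, h2⟩; exact ⟨h2, h1, le_trans h2 hu1⟩]
    have step2 : (∫ v in Icc (0:ℝ) u, K u v * (m * n * u ^ (m-1) * v ^ (n-1)))
        = ∫ v in (0:ℝ)..u, (fun t => c * (K 1 t * t ^ (n-1))) (v / u) := by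
      rw [integral_Icc_eq_integral_Ioc, ← intervalIntegral.integral_of_le hu0.le]
      apply intervalIntegral.integral_congr
      intro v hv
      rw [uIcc_of_le hu0.le] at hv
      obtain ⟨hv0, hvu⟩ := hv
      have hdiv : 0 ≤ v / u := div_nonneg hv0 hu0.le
      have e1 : K u v = u * K 1 (v / u) := by
        have h := hhom u 1 (v / u) hu0 zero_le_one hdiv
        rw [mul_one] at h
        rw [show u * (v / u) = v by field_simp] at h
        exact h
      have e2 : v ^ (n-1) = u ^ (n-1) * (v / u) ^ (n-1) := by
        rw [← Real.mul_rpow hu0.le hdiv, show u * (v / u) = v by field_simp]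
      show K u v * (m * n * u ^ (m-1) * v ^ (n-1)) = c * (K 1 (v/u) * (v/u) ^ (n-1))
      rw [e1, e2, hc]; ring
    have step3 : (∫ v in (0:ℝ)..u, (fun t => c * (K 1 t * t ^ (n-1))) (v / u))
        = u • ∫ t in (0:ℝ)..1, c * (K 1 t * t ^ (n-1)) := by
      have h3 := intervalIntegral.integral_comp_div (a := 0) (b := u) (c := u)
        (fun t => c * (K 1 t * t ^ (n-1))) hu0.ne'
      rw [zero_div, div_self hu0.ne'] at h3
      exact h3
    have step4 : (∫ t in (0:ℝ)..1, c * (K 1 t * t ^ (n-1))) = c * B := by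
      rw [intervalIntegral.integral_const_mul]
    rw [step1, step2, step3, step4, smul_eq_mul, hc]
    have hpow : u * (u * (u ^ (m-1) * u ^ (n-1))) = u ^ (m + n) := by
      rw [show m + n = 1 + (1 + ((m-1) + (n-1))) by ring, Real.rpow_add hu0,
        Real.rpow_add hu0, Real.rpow_add hu0, Real.rpow_one]
    linear_combination (m * n * B) * hpow
  rw [integral_congr_ae houter, integral_const_mul]
  have : ∫ u, u ^ (m + n) ∂muI = 1 / (m + n + 1) := by
    have := integral_rpow_restrict (m := m + n + 1) (by linarith)
    rw [show m + n + 1 - 1 = m + n by ring] at this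
    exact this
  rw [this]; ring

-- continuation: to be appended to c.lean (inside section TDMAux, after kernel_integral)
noncomputable def polyMeasure' (m₁ m₂ : ℝ) : Measure (ℝ × ℝ) :=
  nu2.withDensity (fun q => ENNReal.ofReal (m₁ * m₂ * q.1 ^ (m₁ - 1) * q.2 ^ (m₂ - 1)))

lemma kernel_intervalIntegrable (K : ℝ → ℝ → ℝ)
    (hmeas1 : AEStronglyMeasurable (fun t : ℝ => K 1 t) muI)
    (hbd : ∀ u v : ℝ, u ∈ Icc (0:ℝ) 1 → v ∈ Icc (0:ℝ) 1 → |K u v| ≤ 1)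
    {n : ℝ} (hn : 0 < n) :
    IntervalIntegrable (fun t => K 1 t * t ^ (n-1)) volume 0 1 := by
  rw [intervalIntegrable_iff_integrableOn_Ioc_of_le zero_le_one]
  have hmono : (volume : Measure ℝ).restrict (Ioc 0 1) ≤ muI :=
    Measure.restrict_mono Ioc_subset_Icc_self le_rfl
  refine Integrable.mono' (g := fun t : ℝ => |t ^ (n-1)|)
    ?_ ?_ ?_
  · exact ((integrable_rpow_restrict hn).mono_measure hmono).abs
  · exact (hmeas1.mono_measure hmono).mul
      ((measurable_id.pow_const _).aestronglyMeasurable (μ := volume.restrict (Ioc 0 1)))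
  · filter_upwards [ae_restrict_mem measurableSet_Ioc] with t ht
    rw [Real.norm_eq_abs, abs_mul]
    have : |K 1 t| ≤ 1 := hbd 1 t (by norm_num) ⟨ht.1.le, ht.2⟩
    calc |K 1 t| * |t ^ (n-1)| ≤ 1 * |t ^ (n-1)| :=
          mul_le_mul_of_nonneg_right this (abs_nonneg _)
      _ = |t ^ (n-1)| := one_mul _

/-- Main integral formula for a bounded, continuous, 1-homogeneous kernel. -/
lemma integral_polyMeasure (K : ℝ → ℝ → ℝ)
    (hcont : ContinuousOn (fun z : ℝ × ℝ => K z.1 z.2) ((Icc (0:ℝ) 1) ×ˢ (Icc (0:ℝ) 1)))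
    (hbd : ∀ u v : ℝ, u ∈ Icc (0:ℝ) 1 → v ∈ Icc (0:ℝ) 1 → |K u v| ≤ 1)
    (hhom : ∀ s u v : ℝ, 0 < s → 0 ≤ u → 0 ≤ v → K (s*u) (s*v) = s * K u v)
    {m₁ m₂ : ℝ} (hm₁ : 0 < m₁) (hm₂ : 0 < m₂) :
    ∫ z : ℝ × ℝ, K z.1 z.2 ∂(polyMeasure' m₁ m₂)
      = m₁ * m₂ / (m₁ + m₂ + 1) *
          ∫ t in (0:ℝ)..1, (K t 1 * t ^ (m₁ - 1) + K 1 t * t ^ (m₂ - 1)) := by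
  classical
  set W : ℝ × ℝ → ℝ := fun z => m₁ * m₂ * z.1 ^ (m₁-1) * z.2 ^ (m₂-1) with hW
  have hmeasK : AEStronglyMeasurable (fun z : ℝ × ℝ => K z.1 z.2) nu2 := by
    rw [nu2_eq]; exact hcont.aestronglyMeasurable sq_meas
  have hcontK' : ContinuousOn (fun z : ℝ × ℝ => K z.2 z.1) ((Icc (0:ℝ) 1) ×ˢ (Icc (0:ℝ) 1)) := by
    have : (fun z : ℝ × ℝ => K z.2 z.1)
        = (fun z : ℝ × ℝ => K z.1 z.2) ∘ Prod.swap := rfl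
    rw [this]
    exact hcont.comp continuous_swap.continuousOn
      (fun z hz => ⟨hz.2, hz.1⟩)
  have hmeasK' : AEStronglyMeasurable (fun z : ℝ × ℝ => K z.2 z.1) nu2 := by
    rw [nu2_eq]; exact hcontK'.aestronglyMeasurable sq_meas
  -- Step A: withDensity to weighted integral
  have stepA : ∫ z : ℝ × ℝ, K z.1 z.2 ∂(polyMeasure' m₁ m₂)
      = ∫ z, K z.1 z.2 * W z ∂nu2 := by
    have hrw : (fun q : ℝ × ℝ => ENNReal.ofReal (W q))
        = fun q => ((W q).toNNReal : ℝ≥0∞) := rfl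
    rw [polyMeasure', show (fun q : ℝ × ℝ =>
        ENNReal.ofReal (m₁ * m₂ * q.1 ^ (m₁ - 1) * q.2 ^ (m₂ - 1)))
        = fun q => ((W q).toNNReal : ℝ≥0∞) from rfl]
    rw [integral_withDensity_eq_integral_smul
      ((meas_W m₁ m₂).real_toNNReal) (fun z => K z.1 z.2)]
    apply integral_congr_ae
    filter_upwards [ae_sq] with z hz
    have h0 : 0 ≤ W z := by
      have h1 : (0:ℝ) ≤ z.1 ^ (m₁ - 1) := Real.rpow_nonneg hz.1.1 _
      have h2 : (0:ℝ) ≤ z.2 ^ (m₂ - 1) := Real.rpow_nonneg hz.2.1 _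
      positivity
    rw [NNReal.smul_def, smul_eq_mul, Real.coe_toNNReal _ h0, mul_comm]
  rw [stepA]
  -- integrable pieces
  have hIntPiece : ∀ S : Set (ℝ × ℝ), MeasurableSet S →
      Integrable (fun z => S.indicator (fun z : ℝ × ℝ => K z.1 z.2 * W z) z) nu2 := by
    intro S hS
    refine Integrable.mono' (g := fun z => |W z|) (integrable_W hm₁ hm₂).abs
      ((hmeasK.mul (meas_W m₁ m₂).aestronglyMeasurable).indicator hS) ?_
    filter_upwards [ae_sq] with z hz
    rw [Set.indicator_apply]
    by_cases h : z ∈ S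
    · simp only [h, if_pos]
      rw [Real.norm_eq_abs, abs_mul]
      calc |K z.1 z.2| * |W z| ≤ 1 * |W z| :=
            mul_le_mul_of_nonneg_right (hbd _ _ hz.1 hz.2) (abs_nonneg _)
        _ = |W z| := one_mul _
    · simp [h, abs_nonneg]
  -- Step B: split along the diagonal
  have hsplit : (fun z : ℝ × ℝ => K z.1 z.2 * W z)
      = (fun z : ℝ × ℝ => (if z.2 ≤ z.1 then K z.1 z.2 * W z else 0)
          + (if z.1 < z.2 then K z.1 z.2 * W z else 0)) := by
    funext z
    by_cases h : z.2 ≤ z.1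
    · simp [h, not_lt.mpr h]
    · simp [h, not_le.mp h]
  have hle : MeasurableSet {z : ℝ × ℝ | z.2 ≤ z.1} :=
    measurableSet_le measurable_snd measurable_fst
  have hlt : MeasurableSet {z : ℝ × ℝ | z.1 < z.2} :=
    measurableSet_lt measurable_fst measurable_snd
  have hI1 : Integrable (fun z : ℝ × ℝ => (if z.2 ≤ z.1 then K z.1 z.2 * W z else 0)) nu2 := by
    have := hIntPiece _ hle
    apply this.congr
    filter_upwards with z
    rw [Set.indicator_apply]; rfl
  have hI2 : Integrable (fun z : ℝ × ℝ => (if z.1 < z.2 then K z.1 z.2 * W z else 0)) nu2 := by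
    have := hIntPiece _ hlt
    apply this.congr
    filter_upwards with z
    rw [Set.indicator_apply]; rfl
  rw [hsplit, integral_add hI1 hI2]
  -- first piece: kernel_integral directly
  have hP1 : ∫ z, (if z.2 ≤ z.1 then K z.1 z.2 * W z else 0) ∂nu2
      = (m₁ * m₂ / (m₁ + m₂ + 1)) * ∫ t in (0:ℝ)..1, K 1 t * t ^ (m₂-1) :=
    kernel_integral K hmeasK hbd hhom hm₁ hm₂
  -- second piece: swap coordinates
  have hP2 : ∫ z, (if z.1 < z.2 then K z.1 z.2 * W z else 0) ∂nu2
      = (m₂ * m₁ / (m₂ + m₁ + 1)) * ∫ t in (0:ℝ)..1, K t 1 * t ^ (m₁-1) := by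
    have hswap : ∫ z, (if z.1 < z.2 then K z.1 z.2 * W z else 0) ∂nu2
        = ∫ z : ℝ × ℝ, (if z.2 < z.1 then K z.2 z.1 * W (z.2, z.1) else 0) ∂nu2 := by
      rw [show nu2 = muI.prod muI from rfl,
        ← integral_prod_swap (fun z : ℝ × ℝ => (if z.1 < z.2 then K z.1 z.2 * W z else 0))]
      rfl
    rw [hswap]
    have hae : ∀ᵐ z ∂nu2, z.1 ≠ z.2 := by
      rw [ae_iff]
      have : {z : ℝ × ℝ | ¬ z.1 ≠ z.2} = {z : ℝ × ℝ | z.1 = z.2} := by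
        ext z; simp
      rw [this]; exact nu2_diag
    have hcongr : ∫ z : ℝ × ℝ, (if z.2 < z.1 then K z.2 z.1 * W (z.2, z.1) else 0) ∂nu2
        = ∫ z : ℝ × ℝ, (if z.2 ≤ z.1 then (fun u v => K v u) z.1 z.2
            * (m₂ * m₁ * z.1 ^ (m₂-1) * z.2 ^ (m₁-1)) else 0) ∂nu2 := by
      apply integral_congr_ae
      filter_upwards [hae] with z hz
      by_cases h : z.2 < z.1
      · rw [if_pos h, if_pos h.le]
        show K z.2 z.1 * (m₁ * m₂ * z.2 ^ (m₁-1) * z.1 ^ (m₂-1))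
          = K z.2 z.1 * (m₂ * m₁ * z.1 ^ (m₂-1) * z.2 ^ (m₁-1))
        ring
      · have h' : ¬ z.2 ≤ z.1 := by
          intro hle2
          exact h (lt_of_le_of_ne hle2 (fun he => hz he.symm))
        rw [if_neg h, if_neg h']
    rw [hcongr]
    exact kernel_integral (fun u v => K v u) hmeasK'
      (fun u v hu hv => hbd v u hv hu)
      (fun s u v hs hu hv => hhom s v u hs hv hu) hm₂ hm₁
  rw [hP1, hP2]
  have hmeas1 : AEStronglyMeasurable (fun t : ℝ => K 1 t) muI := by
    have : ContinuousOn (fun t : ℝ => K 1 t) (Icc (0:ℝ) 1) := by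
      have : (fun t : ℝ => K 1 t)
          = (fun z : ℝ × ℝ => K z.1 z.2) ∘ (fun t => ((1:ℝ), t)) := rfl
      rw [this]
      exact hcont.comp (Continuous.continuousOn (continuous_const.prodMk continuous_id))
        (fun t ht => ⟨⟨zero_le_one, le_refl 1⟩, ht⟩)
    exact this.aestronglyMeasurable measurableSet_Icc
  have hmeas1' : AEStronglyMeasurable (fun t : ℝ => K t 1) muI := by
    have : ContinuousOn (fun t : ℝ => K t 1) (Icc (0:ℝ) 1) := by
      have : (fun t : ℝ => K t 1)
          = (fun z : ℝ × ℝ => K z.1 z.2) ∘ (fun t => (t, (1:ℝ))) := rfl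
      rw [this]
      exact hcont.comp (Continuous.continuousOn (continuous_id.prodMk continuous_const))
        (fun t ht => ⟨ht, ⟨zero_le_one, le_refl 1⟩⟩)
    exact this.aestronglyMeasurable measurableSet_Icc
  rw [intervalIntegral.integral_add
    (kernel_intervalIntegrable (fun u v => K v u) hmeas1' (fun u v hu hv => hbd v u hv hu) hm₁)
    (kernel_intervalIntegrable K hmeas1 hbd hm₂)]
  ring


lemma muI_singleton (x : ℝ) : muI {x} = 0 := by
  rw [muI, Measure.restrict_apply (measurableSet_singleton x)]
  exact measure_mono_null inter_subset_left (Real.volume_singleton)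

lemma lintegral_density {m n : ℝ} (hm : 0 < m) (hn : 0 < n) :
    ∫⁻ z, ENNReal.ofReal (m * n * z.1 ^ (m-1) * z.2 ^ (n-1)) ∂nu2 = 1 := by
  have hnn : 0 ≤ᵐ[nu2] fun z : ℝ × ℝ => m * n * z.1 ^ (m-1) * z.2 ^ (n-1) := by
    filter_upwards [ae_sq] with z hz
    have h1 : (0:ℝ) ≤ z.1 ^ (m-1) := Real.rpow_nonneg hz.1.1 _
    have h2 : (0:ℝ) ≤ z.2 ^ (n-1) := Real.rpow_nonneg hz.2.1 _
    positivity
  rw [← ofReal_integral_eq_lintegral_ofReal (integrable_W hm hn) hnn]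
  have h1 : ∫ z : ℝ × ℝ, m * n * z.1 ^ (m-1) * z.2 ^ (n-1) ∂nu2
      = ∫ z : ℝ × ℝ, (fun t => m * t ^ (m-1)) z.1 * (fun t => n * t ^ (n-1)) z.2 ∂nu2 := by
    apply integral_congr_ae
    filter_upwards with z
    show m * n * z.1 ^ (m-1) * z.2 ^ (n-1) = (m * z.1 ^ (m-1)) * (n * z.2 ^ (n-1))
    ring
  rw [h1, show nu2 = muI.prod muI from rfl,
    integral_prod_mul (fun t => m * t ^ (m-1)) (fun t => n * t ^ (n-1)),
    integral_const_mul, integral_const_mul, integral_rpow_restrict hm, integral_rpow_restrict hn]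
  rw [show m * (1/m) * (n * (1/n)) = 1 by field_simp]
  exact ENNReal.ofReal_one

lemma isProb_poly {m n : ℝ} (hm : 0 < m) (hn : 0 < n) :
    IsProbabilityMeasure (polyMeasure' m n) := by
  constructor
  rw [polyMeasure', withDensity_apply _ MeasurableSet.univ, Measure.restrict_univ]
  exact lintegral_density hm hn

lemma nu2_compl_sq : nu2 (((Icc (0:ℝ) 1) ×ˢ (Icc (0:ℝ) 1))ᶜ) = 0 := by
  rw [nu2_eq, Measure.restrict_apply sq_meas.compl, compl_inter_self]
  exact measure_empty

lemma nu2_axes : nu2 {q : ℝ × ℝ | q.1 = 0 ∨ q.2 = 0} = 0 := by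
  have hsub : {q : ℝ × ℝ | q.1 = 0 ∨ q.2 = 0}
      ⊆ (({(0:ℝ)} : Set ℝ) ×ˢ (univ : Set ℝ)) ∪ ((univ : Set ℝ) ×ˢ ({(0:ℝ)} : Set ℝ)) := by
    rintro q (h | h)
    · exact Or.inl ⟨h, mem_univ _⟩
    · exact Or.inr ⟨mem_univ _, h⟩
  apply measure_mono_null hsub
  apply measure_union_null
  · rw [nu2, Measure.prod_prod, muI_singleton, zero_mul]
  · rw [nu2, Measure.prod_prod, muI_singleton, mul_zero]

/-- The full formula. -/
lemma tdm_formula (m₁ m₂ : ℝ) (hm₁ : 0 < m₁) (hm₂ : 0 < m₂) (C Λ : ℝ → ℝ → ℝ)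
    (hC : IsCopula C) (hT : HasTDF C Λ) :
    tdm Λ (polyMeasure m₁ m₂)
      = ((m₁ + 1) * (m₂ + 1) / (m₁ + m₂ + 2)) *
          ∫ t in (0:ℝ)..1, (Λ t 1 * t ^ (m₁ - 1) + Λ 1 t * t ^ (m₂ - 1)) := by
  have hpoly : polyMeasure m₁ m₂ = polyMeasure' m₁ m₂ := rfl
  have hlip : ∀ x x' y y' : ℝ, x ∈ Icc (0:ℝ) 1 → x' ∈ Icc (0:ℝ) 1 → y ∈ Icc (0:ℝ) 1 →
      y' ∈ Icc (0:ℝ) 1 → |C x y - C x' y'| ≤ |x - x'| + |y - y'| :=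
    fun x x' y y' hx hx' hy hy' => cop_lip hC hx hx' hy hy'
  have hbdΛ : ∀ u v : ℝ, u ∈ Icc (0:ℝ) 1 → v ∈ Icc (0:ℝ) 1 → |Λ u v| ≤ 1 := by
    intro u v hu hv
    have h1 := tdf_nonneg hT (fun x y hx hy => cop_nonneg hC hx hy) hu.1 hv.1
    have h2 := tdf_le_min hT
      (fun x y hx hy => ⟨cop_le_left hC hx hy, cop_le_right hC hx hy⟩) hu.1 hv.1
    have h3 : min u v ≤ 1 := le_trans (min_le_left _ _) hu.2
    rw [abs_le]; constructor <;> linarith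
  have hcontΛ : ContinuousOn (fun z : ℝ × ℝ => Λ z.1 z.2)
      ((Icc (0:ℝ) 1) ×ˢ (Icc (0:ℝ) 1)) :=
    (tdf_contOn hT hlip).mono (fun z hz => ⟨hz.1.1, hz.2.1⟩)
  have hhomΛ : ∀ s u v : ℝ, 0 < s → 0 ≤ u → 0 ≤ v → Λ (s*u) (s*v) = s * Λ u v :=
    fun s u v hs hu hv => tdf_homog hT hs hu hv
  have hnum : ∫ q : ℝ × ℝ, Λ q.1 q.2 ∂(polyMeasure' m₁ m₂)
      = m₁ * m₂ / (m₁ + m₂ + 1) *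
        ∫ t in (0:ℝ)..1, (Λ t 1 * t ^ (m₁-1) + Λ 1 t * t ^ (m₂-1)) :=
    integral_polyMeasure Λ hcontΛ hbdΛ hhomΛ hm₁ hm₂
  -- the min kernel
  have hcontm : ContinuousOn (fun z : ℝ × ℝ => min z.1 z.2)
      ((Icc (0:ℝ) 1) ×ˢ (Icc (0:ℝ) 1)) := (continuous_fst.min continuous_snd).continuousOn
  have hbdm : ∀ u v : ℝ, u ∈ Icc (0:ℝ) 1 → v ∈ Icc (0:ℝ) 1 → |min u v| ≤ 1 := by
    intro u v hu hv
    rw [abs_le]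
    constructor
    · have := le_min hu.1 hv.1; linarith
    · exact le_trans (min_le_left _ _) hu.2
  have hhomm : ∀ s u v : ℝ, 0 < s → 0 ≤ u → 0 ≤ v → min (s*u) (s*v) = s * min u v := by
    intro s u v hs hu hv
    rcases le_total u v with h | h
    · rw [min_eq_left (mul_le_mul_of_nonneg_left h hs.le), min_eq_left h]
    · rw [min_eq_right (mul_le_mul_of_nonneg_left h hs.le), min_eq_right h]
  have hden : ∫ q : ℝ × ℝ, min q.1 q.2 ∂(polyMeasure' m₁ m₂)
      = m₁ * m₂ / (m₁ + m₂ + 1) *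
        ∫ t in (0:ℝ)..1, (min t 1 * t ^ (m₁-1) + min 1 t * t ^ (m₂-1)) :=
    integral_polyMeasure (fun u v => min u v) hcontm hbdm hhomm hm₁ hm₂
  have hkey : ∀ t : ℝ, 0 ≤ t → ∀ m : ℝ, 0 < m → t * t ^ (m-1) = t ^ m := by
    intro t ht m hm
    rcases eq_or_lt_of_le ht with h | h
    · rw [← h, Real.zero_rpow hm.ne', zero_mul]
    · have h2 := Real.rpow_add h 1 (m-1)
      rw [Real.rpow_one, show (1:ℝ) + (m-1) = m by ring] at h2
      exact h2.symm
  have hdenint : ∫ t in (0:ℝ)..1, (min t 1 * t ^ (m₁-1) + min 1 t * t ^ (m₂-1))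
      = 1/(m₁+1) + 1/(m₂+1) := by
    have hEq : EqOn (fun t : ℝ => min t 1 * t ^ (m₁-1) + min 1 t * t ^ (m₂-1))
        (fun t : ℝ => t ^ m₁ + t ^ m₂) (uIcc (0:ℝ) 1) := by
      intro t ht
      rw [uIcc_of_le zero_le_one] at ht
      obtain ⟨ht0, ht1⟩ := ht
      show min t 1 * t ^ (m₁-1) + min 1 t * t ^ (m₂-1) = t ^ m₁ + t ^ m₂
      rw [min_eq_left ht1, min_eq_right ht1, hkey t ht0 m₁ hm₁, hkey t ht0 m₂ hm₂]
    rw [intervalIntegral.integral_congr hEq,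
      intervalIntegral.integral_add
        (intervalIntegral.intervalIntegrable_rpow' (by linarith))
        (intervalIntegral.intervalIntegrable_rpow' (by linarith)),
      integral_rpow (Or.inl (by linarith)), integral_rpow (Or.inl (by linarith)),
      Real.one_rpow, Real.zero_rpow (by positivity : m₁ + 1 ≠ 0),
      Real.zero_rpow (by positivity : m₂ + 1 ≠ 0)]
    norm_num
  rw [tdm, hpoly, hnum, hden, hdenint]
  have ha : m₁ * m₂ / (m₁ + m₂ + 1) ≠ 0 := by positivity
  rw [mul_div_mul_left _ _ ha]
  have hd : (0:ℝ) < 1/(m₁+1) + 1/(m₂+1) := by positivity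
  rw [div_eq_iff hd.ne']
  field_simp
  ring

end TDMAux

theorem tdm_polynomially_weighted (m₁ m₂ : ℝ) (hm₁ : 0 < m₁) (hm₂ : 0 < m₂) :
    IsTailGenMeasure (polyMeasure m₁ m₂) ∧
    (∀ C Λ : ℝ → ℝ → ℝ, IsCopula C → HasTDF C Λ →
      tdm Λ (polyMeasure m₁ m₂)
        = ((m₁ + 1) * (m₂ + 1) / (m₁ + m₂ + 2)) *
            ∫ t in (0:ℝ)..1, (Λ t 1 * t ^ (m₁ - 1) + Λ 1 t * t ^ (m₂ - 1))) ∧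
    (∀ C Λ : ℝ → ℝ → ℝ, IsCopula C → HasTDF C Λ →
      tdm Λ (polyMeasure 1 1) = ∫ t in (0:ℝ)..1, (Λ t 1 + Λ 1 t)) := by
  have hpoly : polyMeasure m₁ m₂ = polyMeasure' m₁ m₂ := rfl
  refine ⟨⟨?_, ?_, ?_⟩, fun C Λ hC hT => tdm_formula m₁ m₂ hm₁ hm₂ C Λ hC hT,
    fun C Λ hC hT => ?_⟩
  · rw [hpoly]; exact isProb_poly hm₁ hm₂
  · rw [hpoly, polyMeasure']
    exact withDensity_absolutelyContinuous _ _ nu2_compl_sq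
  · rw [hpoly, polyMeasure']
    have h0 : nu2.withDensity
        (fun q : ℝ × ℝ => ENNReal.ofReal (m₁ * m₂ * q.1 ^ (m₁ - 1) * q.2 ^ (m₂ - 1)))
        {q : ℝ × ℝ | q.1 = 0 ∨ q.2 = 0} = 0 :=
      withDensity_absolutelyContinuous _ _ nu2_axes
    rw [h0]; exact zero_lt_one
  · rw [tdm_formula 1 1 one_pos one_pos C Λ hC hT]
    norm_num [Real.rpow_zero]
end

section
/- Let μ be a tail generating measure. Then there exist weights w₀, w₁, w₂ ≥ 0 with w₀ + w₁ + w₂ = 1 and Borel probability measures μ₁ and μ₂ on (0,1) such that for every bivariate copula C admitting a tail dependence function Λ, λ_μ(C) = ( w₀·Λ(1,1) + w₁·∫_{(0,1)} Λ(t,1) dμ₁(t) + w₂·∫_{(0,1)} Λ(1,t) dμ₂(t) ) / ( w₀ + w₁·∫_{(0,1)} t dμ₁(t) + w₂·∫_{(0,1)} t dμ₂(t) ). -/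
open MeasureTheory Filter Set
open scoped NNReal ENNReal

namespace TDMAux


variable {C Λ : ℝ → ℝ → ℝ}

lemma mono_fst (hC : IsCopula C) {u u' v : ℝ} (hu : u ∈ Icc (0:ℝ) 1)
    (hu' : u' ∈ Icc (0:ℝ) 1) (hv : v ∈ Icc (0:ℝ) 1) (h : u ≤ u') :
    C u v ≤ C u' v := by
  have h2 := hC.2.2 u u' 0 v hu hu' ⟨le_rfl, zero_le_one⟩ hv h hv.1
  have e1 := (hC.2.1 u' hu').1
  have e2 := (hC.2.1 u hu).1
  linarith

lemma lip_fst (hC : IsCopula C) {u u' v : ℝ} (hu : u ∈ Icc (0:ℝ) 1)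
    (hu' : u' ∈ Icc (0:ℝ) 1) (hv : v ∈ Icc (0:ℝ) 1) (h : u ≤ u') :
    C u' v - C u v ≤ u' - u := by
  have h2 := hC.2.2 u u' v 1 hu hu' hv ⟨zero_le_one, le_rfl⟩ h hv.2
  have e1 := (hC.2.1 u' hu').2.2.1
  have e2 := (hC.2.1 u hu).2.2.1
  linarith

lemma abs_lip_fst (hC : IsCopula C) {u u' v : ℝ} (hu : u ∈ Icc (0:ℝ) 1)
    (hu' : u' ∈ Icc (0:ℝ) 1) (hv : v ∈ Icc (0:ℝ) 1) :
    |C u' v - C u v| ≤ |u' - u| := by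
  rcases le_total u u' with h | h
  · rw [abs_of_nonneg (by linarith [mono_fst hC hu hu' hv h]),
      abs_of_nonneg (by linarith)]
    exact lip_fst hC hu hu' hv h
  · rw [abs_of_nonpos (by linarith [mono_fst hC hu' hu hv h]),
      abs_of_nonpos (by linarith)]
    linarith [lip_fst hC hu' hu hv h]

lemma mono_snd (hC : IsCopula C) {u v v' : ℝ} (hu : u ∈ Icc (0:ℝ) 1)
    (hv : v ∈ Icc (0:ℝ) 1) (hv' : v' ∈ Icc (0:ℝ) 1) (h : v ≤ v') :
    C u v ≤ C u v' := by
  have h2 := hC.2.2 0 u v v' ⟨le_rfl, zero_le_one⟩ hu hv hv' hu.1 h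
  have e1 := (hC.2.1 v' hv').2.1
  have e2 := (hC.2.1 v hv).2.1
  linarith

lemma lip_snd (hC : IsCopula C) {u v v' : ℝ} (hu : u ∈ Icc (0:ℝ) 1)
    (hv : v ∈ Icc (0:ℝ) 1) (hv' : v' ∈ Icc (0:ℝ) 1) (h : v ≤ v') :
    C u v' - C u v ≤ v' - v := by
  have h2 := hC.2.2 u 1 v v' hu ⟨zero_le_one, le_rfl⟩ hv hv' hu.2 h
  have e1 := (hC.2.1 v' hv').2.2.2
  have e2 := (hC.2.1 v hv).2.2.2
  linarith

lemma abs_lip_snd (hC : IsCopula C) {u v v' : ℝ} (hu : u ∈ Icc (0:ℝ) 1)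
    (hv : v ∈ Icc (0:ℝ) 1) (hv' : v' ∈ Icc (0:ℝ) 1) :
    |C u v' - C u v| ≤ |v' - v| := by
  rcases le_total v v' with h | h
  · rw [abs_of_nonneg (by linarith [mono_snd hC hu hv hv' h]),
      abs_of_nonneg (by linarith)]
    exact lip_snd hC hu hv hv' h
  · rw [abs_of_nonpos (by linarith [mono_snd hC hu hv' hv h]),
      abs_of_nonpos (by linarith)]
    linarith [lip_snd hC hu hv' hv h]

lemma copula_lip (hC : IsCopula C) {u u' v v' : ℝ} (hu : u ∈ Icc (0:ℝ) 1)
    (hu' : u' ∈ Icc (0:ℝ) 1) (hv : v ∈ Icc (0:ℝ) 1) (hv' : v' ∈ Icc (0:ℝ) 1) :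
    |C u v - C u' v'| ≤ |u - u'| + |v - v'| := by
  have h1 := abs_lip_fst hC hu' hu hv
  have h2 := abs_lip_snd hC hu' hv' hv
  calc |C u v - C u' v'| = |(C u v - C u' v) + (C u' v - C u' v')| := by ring_nf
    _ ≤ |C u v - C u' v| + |C u' v - C u' v'| := abs_add_le _ _
    _ ≤ |u - u'| + |v - v'| := by
        exact add_le_add h1 h2

lemma ev_small (M : ℝ) (hM : 0 ≤ M) :
    ∀ᶠ p in nhdsWithin (0:ℝ) (Ioi 0), 0 < p ∧ p * M ≤ 1 := by
  have hb : (0:ℝ) < 1 / (M + 1) := by positivity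
  filter_upwards [Ioo_mem_nhdsGT_of_mem (show (0:ℝ) ∈ Ico (0:ℝ) (1/(M+1)) from ⟨le_rfl, hb⟩)]
    with p hp
  refine ⟨hp.1, ?_⟩
  have h1 : p * (M + 1) < 1 := by
    have := hp.2
    calc p * (M+1) < (1/(M+1)) * (M+1) := by
          apply mul_lt_mul_of_pos_right this (by positivity)
      _ = 1 := by field_simp
  nlinarith [hp.1]

lemma mem_of_small {p u M : ℝ} (hp : 0 < p) (hu : 0 ≤ u) (huM : u ≤ M) (h : p * M ≤ 1) :
    p * u ∈ Icc (0:ℝ) 1 :=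
  ⟨by positivity, le_trans (by nlinarith) h⟩

lemma lam_zero_right (hC : IsCopula C) (hT : HasTDF C Λ) {u : ℝ} (hu : 0 ≤ u) :
    Λ u 0 = 0 := by
  have h := hT u 0 hu le_rfl
  have h0 : Tendsto (fun p : ℝ => C (p * u) (p * 0) / p)
      (nhdsWithin (0:ℝ) (Ioi 0)) (nhds 0) := by
    apply Tendsto.congr' ?_ tendsto_const_nhds
    filter_upwards [ev_small u hu] with p hp
    have hm := mem_of_small hp.1 hu le_rfl hp.2
    have : C (p * u) (p * 0) = 0 := by
      rw [mul_zero]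
      exact (hC.2.1 (p*u) hm).1
    rw [mul_zero] at this ⊢
    simp [this]
  exact tendsto_nhds_unique h h0

lemma lam_zero_left (hC : IsCopula C) (hT : HasTDF C Λ) {v : ℝ} (hv : 0 ≤ v) :
    Λ 0 v = 0 := by
  have h := hT 0 v le_rfl hv
  have h0 : Tendsto (fun p : ℝ => C (p * 0) (p * v) / p)
      (nhdsWithin (0:ℝ) (Ioi 0)) (nhds 0) := by
    apply Tendsto.congr' ?_ tendsto_const_nhds
    filter_upwards [ev_small v hv] with p hp
    have hm := mem_of_small hp.1 hv le_rfl hp.2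
    have : C (p * 0) (p * v) = 0 := by
      rw [mul_zero]
      exact (hC.2.1 (p*v) hm).2.1
    rw [mul_zero] at this ⊢
    simp [this]
  exact tendsto_nhds_unique h h0

lemma lam_homog (hT : HasTDF C Λ) {c u v : ℝ} (hc : 0 < c) (hu : 0 ≤ u) (hv : 0 ≤ v) :
    Λ (c * u) (c * v) = c * Λ u v := by
  have h1 := hT (c*u) (c*v) (by positivity) (by positivity)
  have hmap : Tendsto (fun p : ℝ => c * p) (nhdsWithin (0:ℝ) (Ioi 0))
      (nhdsWithin (0:ℝ) (Ioi 0)) := by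
    apply tendsto_nhdsWithin_of_tendsto_nhds_of_eventually_within
    · have : Tendsto (fun p : ℝ => c * p) (nhds 0) (nhds 0) := by
        simpa using (tendsto_id.const_mul c : Tendsto (fun p : ℝ => c * p) (nhds 0) (nhds (c * 0)))
      exact this.mono_left nhdsWithin_le_nhds
    · filter_upwards [self_mem_nhdsWithin] with p hp
      exact mul_pos hc hp
  have h2 := (hT u v hu hv).comp hmap
  have h3 : Tendsto (fun p : ℝ => c * (C ((c*p) * u) ((c*p) * v) / (c * p)))
      (nhdsWithin (0:ℝ) (Ioi 0)) (nhds (c * Λ u v)) := h2.const_mul c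
  have h4 : Tendsto (fun p : ℝ => C (p * (c*u)) (p * (c*v)) / p)
      (nhdsWithin (0:ℝ) (Ioi 0)) (nhds (c * Λ u v)) := by
    apply h3.congr'
    filter_upwards [self_mem_nhdsWithin] with p hp
    have hp0 : p ≠ 0 := ne_of_gt hp
    have hc0 : c ≠ 0 := ne_of_gt hc
    rw [show (c*p) * u = p * (c*u) by ring, show (c*p) * v = p * (c*v) by ring]
    field_simp
  exact tendsto_nhds_unique h1 h4

lemma lam_nonneg (hC : IsCopula C) (hT : HasTDF C Λ) {u v : ℝ} (hu : 0 ≤ u) (hv : 0 ≤ v) :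
    0 ≤ Λ u v := by
  refine ge_of_tendsto (hT u v hu hv) ?_
  filter_upwards [ev_small (u+v) (by linarith)] with p hp
  have hmu := mem_of_small hp.1 hu (by linarith) hp.2
  have hmv := mem_of_small hp.1 hv (by linarith) hp.2
  exact div_nonneg (hC.1 _ hmu _ hmv).1 hp.1.le

lemma lam_le_min (hC : IsCopula C) (hT : HasTDF C Λ) {u v : ℝ} (hu : 0 ≤ u) (hv : 0 ≤ v) :
    Λ u v ≤ min u v := by
  refine le_of_tendsto (hT u v hu hv) ?_
  filter_upwards [ev_small (u+v) (by linarith)] with p hp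
  have hmu := mem_of_small hp.1 hu (by linarith) hp.2
  have hmv := mem_of_small hp.1 hv (by linarith) hp.2
  have h1 : C (p*u) (p*v) ≤ p * u := by
    calc C (p*u) (p*v) ≤ C (p*u) 1 := mono_snd hC hmu hmv ⟨zero_le_one, le_rfl⟩ hmv.2
      _ = p * u := (hC.2.1 (p*u) hmu).2.2.1
  have h2 : C (p*u) (p*v) ≤ p * v := by
    calc C (p*u) (p*v) ≤ C 1 (p*v) := mono_fst hC hmu ⟨zero_le_one, le_rfl⟩ hmv hmu.2
      _ = p * v := (hC.2.1 (p*v) hmv).2.2.2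
  refine le_min ?_ ?_
  · rw [div_le_iff₀ hp.1]; linarith [h1]
  · rw [div_le_iff₀ hp.1]; linarith [h2]

lemma lam_lip (hC : IsCopula C) (hT : HasTDF C Λ) {u v u' v' : ℝ}
    (hu : 0 ≤ u) (hv : 0 ≤ v) (hu' : 0 ≤ u') (hv' : 0 ≤ v') :
    |Λ u v - Λ u' v'| ≤ |u - u'| + |v - v'| := by
  have h1 := hT u v hu hv
  have h2 := hT u' v' hu' hv'
  have habs : Tendsto (fun p : ℝ => |C (p*u) (p*v) / p - C (p*u') (p*v') / p|)
      (nhdsWithin (0:ℝ) (Ioi 0)) (nhds |Λ u v - Λ u' v'|) := (h1.sub h2).abs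
  refine le_of_tendsto habs ?_
  filter_upwards [ev_small (u+v+u'+v') (by linarith)] with p hp
  have hmu := mem_of_small hp.1 hu (by linarith) hp.2
  have hmv := mem_of_small hp.1 hv (by linarith) hp.2
  have hmu' := mem_of_small hp.1 hu' (by linarith) hp.2
  have hmv' := mem_of_small hp.1 hv' (by linarith) hp.2
  have hlip := copula_lip hC hmu hmu' hmv hmv'
  have hp0 : p ≠ 0 := ne_of_gt hp.1
  rw [div_sub_div_same, abs_div, abs_of_pos hp.1, div_le_iff₀ hp.1]
  calc |C (p*u) (p*v) - C (p*u') (p*v')| ≤ |p*u - p*u'| + |p*v - p*v'| := hlip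
    _ = p * |u - u'| + p * |v - v'| := by
        rw [← mul_sub, ← mul_sub, abs_mul, abs_mul, abs_of_pos hp.1]
    _ = (|u - u'| + |v - v'|) * p := by ring

def T2 : Set (ℝ × ℝ) := {q | 0 < q.2 ∧ q.2 < q.1 ∧ q.1 ≤ 1}

lemma measurableSet_T2 : MeasurableSet T2 := by
  have : T2 = {q : ℝ × ℝ | 0 < q.2} ∩ ({q | q.2 < q.1} ∩ {q | q.1 ≤ 1}) := rfl
  rw [this]
  exact (measurableSet_lt measurable_const measurable_snd).inter
    ((measurableSet_lt measurable_snd measurable_fst).inter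
      (measurableSet_le measurable_fst measurable_const))

lemma integrableOn_of_bdd {ν : Measure (ℝ × ℝ)} [IsFiniteMeasure ν] {f : ℝ × ℝ → ℝ}
    {s : Set (ℝ × ℝ)} (hs : MeasurableSet s) (hf : Measurable f)
    (hb : ∀ q ∈ s, |f q| ≤ 1) : IntegrableOn f s ν := by
  refine Integrable.mono' (integrable_const 1) hf.aestronglyMeasurable ?_
  rw [ae_restrict_iff' hs]
  filter_upwards with q hq
  simpa using hb q hq

lemma side (ν : Measure (ℝ × ℝ)) [IsFiniteMeasure ν] :
    ∃ m : Measure ℝ, IsProbabilityMeasure m ∧ m ((Ioo (0:ℝ) 1)ᶜ) = 0 ∧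
      ∀ g : ℝ → ℝ, Measurable g →
        ∫ q in T2, q.1 * g (q.2 / q.1) ∂ν = (∫ q in T2, q.1 ∂ν) * ∫ t, g t ∂m := by
  set a := ∫ q in T2, (q.1 : ℝ) ∂ν with ha_def
  have hT2pos : ∀ q ∈ T2, 0 < q.1 := fun q hq => lt_trans hq.1 hq.2.1
  have hbdd : ∀ q ∈ T2, |(q.1 : ℝ)| ≤ 1 := fun q hq => by
    rw [abs_of_pos (hT2pos q hq)]; exact hq.2.2
  have hint : IntegrableOn (fun q : ℝ × ℝ => q.1) T2 ν :=
    integrableOn_of_bdd measurableSet_T2 measurable_fst hbdd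
  by_cases h0 : ν T2 = 0
  · refine ⟨Measure.dirac (1/2), inferInstance, ?_, ?_⟩
    · rw [Measure.dirac_apply' _ measurableSet_Ioo.compl]
      simp only [indicator_apply_eq_zero]
      intro h
      exact absurd (by norm_num : (1/2 : ℝ) ∈ Ioo (0:ℝ) 1) h
    · intro g hg
      have hres : ν.restrict T2 = 0 := Measure.restrict_eq_zero.mpr h0
      have e1 : ∫ q in T2, q.1 * g (q.2 / q.1) ∂ν = 0 := by
        rw [show (∫ q in T2, q.1 * g (q.2 / q.1) ∂ν) =
          ∫ q, q.1 * g (q.2 / q.1) ∂(ν.restrict T2) from rfl, hres, integral_zero_measure]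
      have e2 : a = 0 := by
        rw [ha_def, show (∫ q in T2, (q.1:ℝ) ∂ν) = ∫ q, (q.1:ℝ) ∂(ν.restrict T2) from rfl,
          hres, integral_zero_measure]
      rw [e1, e2, zero_mul]
  · have ha_pos : 0 < a := by
      rw [ha_def]
      refine (integral_pos_iff_support_of_nonneg_ae ?_ hint).mpr ?_
      · have : ∀ᵐ q ∂ν.restrict T2, 0 ≤ (q.1 : ℝ) := by
          rw [ae_restrict_iff' measurableSet_T2]
          filter_upwards with q hq
          exact (hT2pos q hq).le
        exact this
      · have hsub : T2 ⊆ Function.support (fun q : ℝ × ℝ => q.1) :=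
          fun q hq => ne_of_gt (hT2pos q hq)
        calc 0 < ν T2 := by
              exact lt_of_le_of_ne zero_le (Ne.symm h0)
          _ = (ν.restrict T2) T2 := (Measure.restrict_apply_self ν T2).symm
          _ ≤ (ν.restrict T2) (Function.support fun q : ℝ × ℝ => q.1) :=
              measure_mono hsub
    have ha0 : a ≠ 0 := ne_of_gt ha_pos
    set fd : ℝ × ℝ → ℝ≥0 := fun q => q.1.toNNReal with hfd_def
    have hfd : Measurable fd := measurable_fst.real_toNNReal
    set ρ : Measure (ℝ × ℝ) := (ν.restrict T2).withDensity (fun q => (fd q : ℝ≥0∞)) with hρ_def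
    have hρuniv : ρ univ = ENNReal.ofReal a := by
      rw [hρ_def, withDensity_apply _ MeasurableSet.univ, Measure.restrict_univ]
      have hnn : (0 : ℝ × ℝ → ℝ) ≤ᶠ[ae (ν.restrict T2)] fun q => q.1 := by
        have : ∀ᵐ q ∂ν.restrict T2, 0 ≤ (q.1 : ℝ) := by
          rw [ae_restrict_iff' measurableSet_T2]
          filter_upwards with q hq
          exact (hT2pos q hq).le
        exact this
      rw [ha_def, ofReal_integral_eq_lintegral_ofReal hint hnn]
      rfl
    set φ : ℝ × ℝ → ℝ := fun q => q.2 / q.1 with hφ_def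
    have hφ : Measurable φ := measurable_snd.div measurable_fst
    set m : Measure ℝ := (ENNReal.ofReal a)⁻¹ • ρ.map φ with hm_def
    have hTφ : ∀ q ∈ T2, φ q ∈ Ioo (0:ℝ) 1 := by
      intro q hq
      exact ⟨div_pos hq.1 (hT2pos q hq), (div_lt_one (hT2pos q hq)).mpr hq.2.1⟩
    have hρcompl : ρ (φ ⁻¹' (Ioo (0:ℝ) 1)ᶜ) = 0 := by
      rw [hρ_def, withDensity_apply _ (hφ measurableSet_Ioo.compl),
        Measure.restrict_restrict (hφ measurableSet_Ioo.compl)]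
      have : φ ⁻¹' (Ioo (0:ℝ) 1)ᶜ ∩ T2 = ∅ := by
        ext q
        simp only [mem_inter_iff, mem_preimage, mem_compl_iff, mem_empty_iff_false, iff_false,
          not_and]
        intro hq hq2
        exact hq (hTφ q hq2)
      rw [this, Measure.restrict_empty, lintegral_zero_measure]
    have hmc : m ((Ioo (0:ℝ) 1)ᶜ) = 0 := by
      rw [hm_def, Measure.smul_apply, Measure.map_apply hφ measurableSet_Ioo.compl, hρcompl,
        smul_zero]
    have hofa : ENNReal.ofReal a ≠ 0 := by
      simpa using ha_pos
    have hmp : IsProbabilityMeasure m := by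
      constructor
      rw [hm_def, Measure.smul_apply, Measure.map_apply hφ MeasurableSet.univ, preimage_univ,
        hρuniv, smul_eq_mul, ENNReal.inv_mul_cancel hofa ENNReal.ofReal_ne_top]
    refine ⟨m, hmp, hmc, ?_⟩
    intro g hg
    have step1 : ∫ t, g t ∂m = ((ENNReal.ofReal a)⁻¹).toReal • ∫ t, g t ∂(ρ.map φ) := by
      rw [hm_def, integral_smul_measure]
    have step2 : ∫ t, g t ∂(ρ.map φ) = ∫ q, g (φ q) ∂ρ :=
      integral_map hφ.aemeasurable hg.aestronglyMeasurable
    have step3 : ∫ q, g (φ q) ∂ρ = ∫ q, fd q • g (φ q) ∂(ν.restrict T2) := by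
      rw [hρ_def]
      exact integral_withDensity_eq_integral_smul hfd _
    have step4 : ∫ q, fd q • g (φ q) ∂(ν.restrict T2) = ∫ q in T2, q.1 * g (q.2 / q.1) ∂ν := by
      refine setIntegral_congr_fun measurableSet_T2 ?_
      intro q hq
      simp only [hfd_def, hφ_def, NNReal.smul_def, smul_eq_mul]
      rw [Real.coe_toNNReal _ (hT2pos q hq).le]
    have hinv : ((ENNReal.ofReal a)⁻¹).toReal = a⁻¹ := by
      rw [ENNReal.toReal_inv, ENNReal.toReal_ofReal ha_pos.le]
    rw [step1, step2, step3, step4, hinv, smul_eq_mul, ← mul_assoc,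
      mul_inv_cancel₀ ha0, one_mul]


def sqS : Set (ℝ × ℝ) := Icc (0:ℝ) 1 ×ˢ Icc (0:ℝ) 1

def T0 : Set (ℝ × ℝ) := {q | 0 < q.1 ∧ q.1 = q.2 ∧ q.1 ≤ 1}

def T1 : Set (ℝ × ℝ) := Prod.swap ⁻¹' T2

lemma T1_eq : T1 = {q : ℝ × ℝ | 0 < q.1 ∧ q.1 < q.2 ∧ q.2 ≤ 1} := rfl

lemma measurableSet_sqS : MeasurableSet sqS :=
  measurableSet_Icc.prod measurableSet_Icc

lemma measurableSet_T0 : MeasurableSet T0 := by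
  have : T0 = {q : ℝ × ℝ | 0 < q.1} ∩ ({q | q.1 = q.2} ∩ {q | q.1 ≤ 1}) := rfl
  rw [this]
  exact (measurableSet_lt measurable_const measurable_fst).inter
    ((measurableSet_eq_fun measurable_fst measurable_snd).inter
      (measurableSet_le measurable_fst measurable_const))

lemma measurableSet_T1 : MeasurableSet T1 := measurable_swap measurableSet_T2

lemma T0_sub : T0 ⊆ sqS := fun q hq =>
  ⟨⟨hq.1.le, hq.2.2⟩, ⟨hq.2.1 ▸ hq.1.le, hq.2.1 ▸ hq.2.2⟩⟩

lemma T1_sub : T1 ⊆ sqS := fun q hq =>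
  ⟨⟨hq.1.le, le_trans hq.2.1.le hq.2.2⟩, ⟨(lt_trans hq.1 hq.2.1).le, hq.2.2⟩⟩

lemma T2_sub : T2 ⊆ sqS := fun q hq =>
  ⟨⟨(lt_trans hq.1 hq.2.1).le, hq.2.2⟩, ⟨hq.1.le, le_trans hq.2.1.le hq.2.2⟩⟩

lemma disj01 : Disjoint T0 T1 := by
  rw [T1_eq, Set.disjoint_left]
  rintro q ⟨h1, h2, h3⟩ ⟨h4, h5, h6⟩
  rw [h2] at h5
  exact lt_irrefl _ h5

lemma disj02 : Disjoint T0 T2 := by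
  rw [Set.disjoint_left]
  rintro q ⟨h1, h2, h3⟩ ⟨h4, h5, h6⟩
  rw [h2] at h5
  exact lt_irrefl _ h5

lemma disj12 : Disjoint T1 T2 := by
  rw [T1_eq, Set.disjoint_left]
  rintro q ⟨h1, h2, h3⟩ ⟨h4, h5, h6⟩
  exact absurd (lt_trans h2 h5) (lt_irrefl _)

lemma cover {q : ℝ × ℝ} (hq : q ∈ sqS) (h1 : q.1 ≠ 0) (h2 : q.2 ≠ 0) :
    q ∈ T0 ∪ T1 ∪ T2 := by
  have hq1 : 0 < q.1 := lt_of_le_of_ne hq.1.1 (Ne.symm h1)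
  have hq2 : 0 < q.2 := lt_of_le_of_ne hq.2.1 (Ne.symm h2)
  rcases lt_trichotomy q.1 q.2 with h | h | h
  · exact Or.inl (Or.inr ⟨hq1, h, hq.2.2⟩)
  · exact Or.inl (Or.inl ⟨hq1, h, hq.1.2⟩)
  · exact Or.inr ⟨hq2, h, hq.1.2⟩

lemma decomp (μ : Measure (ℝ × ℝ)) [IsFiniteMeasure μ] (hsq : μ sqSᶜ = 0)
    {f : ℝ × ℝ → ℝ} (hf : Measurable f) (hb : ∀ q ∈ sqS, |f q| ≤ 1)
    (h0 : ∀ q ∈ sqS, q.1 = 0 ∨ q.2 = 0 → f q = 0) :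
    ∫ q, f q ∂μ =
      (∫ q in T0, f q ∂μ) + (∫ q in T1, f q ∂μ) + (∫ q in T2, f q ∂μ) := by
  have hae : ∀ᵐ q ∂μ, q ∈ sqS := by
    rw [ae_iff]
    exact hsq
  have hres : μ.restrict sqS = μ := Measure.restrict_eq_self_of_ae_mem hae
  have hUsub : T0 ∪ T1 ∪ T2 ⊆ sqS := by
    intro q hq
    rcases hq with (h | h) | h
    · exact T0_sub h
    · exact T1_sub h
    · exact T2_sub h
  have hUmeas : MeasurableSet (T0 ∪ T1 ∪ T2) :=
    (measurableSet_T0.union measurableSet_T1).union measurableSet_T2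
  have hint : ∀ s : Set (ℝ × ℝ), MeasurableSet s → s ⊆ sqS → IntegrableOn f s μ := by
    intro s hms hssub
    exact integrableOn_of_bdd hms hf (fun q hq => hb q (hssub hq))
  have key : ∫ q, f q ∂μ = ∫ q in sqS, f q ∂μ := by
    conv_lhs => rw [← hres]
  have hsplit : sqS = (T0 ∪ T1 ∪ T2) ∪ (sqS \ (T0 ∪ T1 ∪ T2)) :=
    (union_diff_cancel hUsub).symm
  have hz : ∫ q in sqS \ (T0 ∪ T1 ∪ T2), f q ∂μ = 0 := by
    rw [setIntegral_congr_fun (measurableSet_sqS.diff hUmeas)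
      (show EqOn f (fun _ => (0:ℝ)) (sqS \ (T0 ∪ T1 ∪ T2)) from ?_)]
    · simp
    · intro q hq
      refine h0 q hq.1 ?_
      by_contra hc
      push_neg at hc
      exact hq.2 (cover hq.1 hc.1 hc.2)
  have e1 : ∫ q in sqS, f q ∂μ =
      (∫ q in T0 ∪ T1 ∪ T2, f q ∂μ) + ∫ q in sqS \ (T0 ∪ T1 ∪ T2), f q ∂μ := by
    conv_lhs => rw [hsplit]
    exact setIntegral_union disjoint_sdiff_right (measurableSet_sqS.diff hUmeas)
      (hint _ hUmeas hUsub) (hint _ (measurableSet_sqS.diff hUmeas) diff_subset)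
  have e2 : ∫ q in T0 ∪ T1 ∪ T2, f q ∂μ =
      (∫ q in T0 ∪ T1, f q ∂μ) + ∫ q in T2, f q ∂μ :=
    setIntegral_union (disj02.union_left disj12) measurableSet_T2
      (hint _ (measurableSet_T0.union measurableSet_T1)
        (union_subset T0_sub T1_sub)) (hint _ measurableSet_T2 T2_sub)
  have e3 : ∫ q in T0 ∪ T1, f q ∂μ = (∫ q in T0, f q ∂μ) + ∫ q in T1, f q ∂μ :=
    setIntegral_union disj01 measurableSet_T1 (hint _ measurableSet_T0 T0_sub)
      (hint _ measurableSet_T1 T1_sub)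
  rw [key, e1, e2, e3, hz, add_zero]

end TDMAux

open TDMAux in
theorem tdm_linf_radial_representation (μ : Measure (ℝ × ℝ)) (hμ : IsTailGenMeasure μ) :
    ∃ w₀ w₁ w₂ : ℝ, 0 ≤ w₀ ∧ 0 ≤ w₁ ∧ 0 ≤ w₂ ∧ w₀ + w₁ + w₂ = 1 ∧
      ∃ μ₁ μ₂ : Measure ℝ, IsProbabilityMeasure μ₁ ∧ IsProbabilityMeasure μ₂ ∧
        μ₁ ((Ioo (0:ℝ) 1)ᶜ) = 0 ∧ μ₂ ((Ioo (0:ℝ) 1)ᶜ) = 0 ∧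
        ∀ C Λ : ℝ → ℝ → ℝ, IsCopula C → HasTDF C Λ →
          tdm Λ μ = (w₀ * Λ 1 1 + w₁ * ∫ t, Λ t 1 ∂μ₁ + w₂ * ∫ t, Λ 1 t ∂μ₂) /
                    (w₀ + w₁ * ∫ t, t ∂μ₁ + w₂ * ∫ t, t ∂μ₂) := by
  obtain ⟨hprob, hsqz, haxes⟩ := hμ
  haveI := hprob
  have hsqz' : μ sqSᶜ = 0 := hsqz
  haveI : IsProbabilityMeasure (μ.map Prod.swap) :=
    Measure.isProbabilityMeasure_map measurable_swap.aemeasurable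
  obtain ⟨m₂, hm₂p, hm₂c, hm₂⟩ := side μ
  obtain ⟨m₁, hm₁p, hm₁c, hm₁0⟩ := side (μ.map Prod.swap)
  set a₀ := ∫ q in T0, (q.1 : ℝ) ∂μ with ha₀
  set a₂ := ∫ q in T2, (q.1 : ℝ) ∂μ with ha₂
  set a₁ := ∫ q in T1, (q.2 : ℝ) ∂μ with ha₁
  have hswap : ∀ f : ℝ × ℝ → ℝ, Measurable f →
      ∫ q in T2, f q ∂(μ.map Prod.swap) = ∫ q in T1, f (Prod.swap q) ∂μ := fun f hf =>
    setIntegral_map measurableSet_T2 hf.aestronglyMeasurable measurable_swap.aemeasurable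
  have ha₁' : (∫ q in T2, (q.1 : ℝ) ∂(μ.map Prod.swap)) = a₁ := by
    rw [hswap _ measurable_fst]; rfl
  have hm₁ : ∀ g : ℝ → ℝ, Measurable g →
      ∫ q in T1, q.2 * g (q.1 / q.2) ∂μ = a₁ * ∫ t, g t ∂m₁ := by
    intro g hg
    have h := hm₁0 g hg
    rw [hswap (fun q => q.1 * g (q.2 / q.1))
      (measurable_fst.mul (hg.comp (measurable_snd.div measurable_fst))), ha₁'] at h
    exact h
  -- positivity of the total weight
  have hUmeas : MeasurableSet (T0 ∪ T1 ∪ T2) :=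
    (measurableSet_T0.union measurableSet_T1).union measurableSet_T2
  have hUsub : T0 ∪ T1 ∪ T2 ⊆ sqS := by
    intro q hq
    rcases hq with (h | h) | h
    · exact T0_sub h
    · exact T1_sub h
    · exact T2_sub h
  have hμU : 0 < μ (T0 ∪ T1 ∪ T2) := by
    by_contra hcon
    push_neg at hcon
    have hU0 : μ (T0 ∪ T1 ∪ T2) = 0 := le_antisymm hcon zero_le
    have hcover : (univ : Set (ℝ × ℝ)) ⊆
        sqSᶜ ∪ {q : ℝ × ℝ | q.1 = 0 ∨ q.2 = 0} ∪ (T0 ∪ T1 ∪ T2) := by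
      intro q _
      by_cases hs : q ∈ sqS
      · by_cases h1 : q.1 = 0
        · exact Or.inl (Or.inr (Or.inl h1))
        · by_cases h2 : q.2 = 0
          · exact Or.inl (Or.inr (Or.inr h2))
          · exact Or.inr (cover hs h1 h2)
      · exact Or.inl (Or.inl hs)
    have h2 : (1 : ℝ≥0∞) ≤ μ {q : ℝ × ℝ | q.1 = 0 ∨ q.2 = 0} := by
      calc (1 : ℝ≥0∞) = μ univ := measure_univ.symm
        _ ≤ μ (sqSᶜ ∪ {q : ℝ × ℝ | q.1 = 0 ∨ q.2 = 0} ∪ (T0 ∪ T1 ∪ T2)) :=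
            measure_mono hcover
        _ ≤ μ (sqSᶜ ∪ {q : ℝ × ℝ | q.1 = 0 ∨ q.2 = 0}) + μ (T0 ∪ T1 ∪ T2) :=
            measure_union_le _ _
        _ ≤ μ sqSᶜ + μ {q : ℝ × ℝ | q.1 = 0 ∨ q.2 = 0} + μ (T0 ∪ T1 ∪ T2) :=
            add_le_add (measure_union_le _ _) le_rfl
        _ = μ {q : ℝ × ℝ | q.1 = 0 ∨ q.2 = 0} := by rw [hsqz', hU0, zero_add, add_zero]
    exact absurd h2 (not_le.mpr haxes)
  have hmaxm : Measurable (fun q : ℝ × ℝ => max q.1 q.2) := measurable_fst.max measurable_snd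
  have hmaxb : ∀ q ∈ sqS, |max q.1 q.2| ≤ 1 := by
    intro q hq
    rw [abs_of_nonneg (le_max_of_le_left hq.1.1)]
    exact max_le hq.1.2 hq.2.2
  have hintmax : ∀ s : Set (ℝ × ℝ), MeasurableSet s → s ⊆ sqS →
      IntegrableOn (fun q : ℝ × ℝ => max q.1 q.2) s μ := fun s hms hssub =>
    integrableOn_of_bdd hms hmaxm (fun q hq => hmaxb q (hssub hq))
  have hsum : a₀ + a₁ + a₂ = ∫ q in T0 ∪ T1 ∪ T2, max q.1 q.2 ∂μ := by
    rw [setIntegral_union (disj02.union_left disj12) measurableSet_T2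
        (hintmax _ (measurableSet_T0.union measurableSet_T1) (union_subset T0_sub T1_sub))
        (hintmax _ measurableSet_T2 T2_sub),
      setIntegral_union disj01 measurableSet_T1 (hintmax _ measurableSet_T0 T0_sub)
        (hintmax _ measurableSet_T1 T1_sub)]
    have e0 : ∫ q in T0, max q.1 q.2 ∂μ = a₀ := by
      refine setIntegral_congr_fun measurableSet_T0 ?_
      rintro q ⟨h1, h2, h3⟩
      exact max_eq_left h2.ge
    have e1 : ∫ q in T1, max q.1 q.2 ∂μ = a₁ := by
      refine setIntegral_congr_fun measurableSet_T1 ?_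
      rintro q ⟨h1, h2, h3⟩
      have h2' : q.1 < q.2 := h2
      exact max_eq_right h2'.le
    have e2 : ∫ q in T2, max q.1 q.2 ∂μ = a₂ := by
      refine setIntegral_congr_fun measurableSet_T2 ?_
      rintro q ⟨h1, h2, h3⟩
      exact max_eq_left h2.le
    rw [e0, e1, e2]
  have hmaxposU : ∀ q ∈ T0 ∪ T1 ∪ T2, 0 < max q.1 q.2 := by
    intro q hq
    rcases hq with (h | h) | h
    · exact lt_max_of_lt_left h.1
    · exact lt_max_of_lt_left h.1
    · exact lt_max_of_lt_right h.1
  have hSpos : 0 < a₀ + a₁ + a₂ := by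
    rw [hsum]
    refine (integral_pos_iff_support_of_nonneg_ae ?_ (hintmax _ hUmeas hUsub)).mpr ?_
    · have : ∀ᵐ q ∂μ.restrict (T0 ∪ T1 ∪ T2), 0 ≤ max q.1 q.2 := by
        rw [ae_restrict_iff' hUmeas]
        filter_upwards with q hq
        exact (hmaxposU q hq).le
      exact this
    · have hsub : T0 ∪ T1 ∪ T2 ⊆ Function.support (fun q : ℝ × ℝ => max q.1 q.2) :=
        fun q hq => ne_of_gt (hmaxposU q hq)
      calc 0 < μ (T0 ∪ T1 ∪ T2) := hμU
        _ = (μ.restrict (T0 ∪ T1 ∪ T2)) (T0 ∪ T1 ∪ T2) :=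
            (Measure.restrict_apply_self μ _).symm
        _ ≤ (μ.restrict (T0 ∪ T1 ∪ T2)) (Function.support fun q : ℝ × ℝ => max q.1 q.2) :=
            measure_mono hsub
  set S := a₀ + a₁ + a₂ with hSdef
  have hSne : S ≠ 0 := ne_of_gt hSpos
  have ha₀nn : 0 ≤ a₀ := setIntegral_nonneg measurableSet_T0 (fun q hq => hq.1.le)
  have ha₁nn : 0 ≤ a₁ := setIntegral_nonneg measurableSet_T1 (fun q hq => by
    have h1 : (0:ℝ) < q.1 := hq.1
    have h2 : q.1 < q.2 := hq.2.1
    exact (lt_trans h1 h2).le)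
  have ha₂nn : 0 ≤ a₂ := setIntegral_nonneg measurableSet_T2
    (fun q hq => (lt_trans hq.1 hq.2.1).le)
  refine ⟨a₀ / S, a₁ / S, a₂ / S, div_nonneg ha₀nn hSpos.le, div_nonneg ha₁nn hSpos.le,
    div_nonneg ha₂nn hSpos.le, ?_, m₁, m₂, hm₁p, hm₂p, hm₁c, hm₂c, ?_⟩
  · rw [← add_div, ← add_div, ← hSdef]
    exact div_self hSne
  intro C Λ hC hT
  set F : ℝ × ℝ → ℝ := fun q => Λ (max q.1 0) (max q.2 0) with hF
  have hFlip : LipschitzWith 2 F := by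
    apply LipschitzWith.of_dist_le_mul
    intro q q'
    rw [Real.dist_eq]
    have h1 := lam_lip hC hT (le_max_right q.1 0) (le_max_right q.2 0)
      (le_max_right q'.1 0) (le_max_right q'.2 0)
    have h2 : |max q.1 0 - max q'.1 0| ≤ |q.1 - q'.1| := abs_max_sub_max_le_abs _ _ _
    have h3 : |max q.2 0 - max q'.2 0| ≤ |q.2 - q'.2| := abs_max_sub_max_le_abs _ _ _
    have h4 : |q.1 - q'.1| ≤ dist q q' := by
      rw [← Real.dist_eq, Prod.dist_eq]
      exact le_max_left _ _
    have h5 : |q.2 - q'.2| ≤ dist q q' := by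
      rw [← Real.dist_eq, Prod.dist_eq]
      exact le_max_right _ _
    have hc : ((2 : ℝ≥0) : ℝ) = 2 := by norm_num
    rw [hc]
    simp only [hF]
    linarith
  have hFmeas : Measurable F := hFlip.continuous.measurable
  have hΛnn : ∀ {u v : ℝ}, 0 ≤ u → 0 ≤ v → 0 ≤ Λ u v := fun hu hv => lam_nonneg hC hT hu hv
  have hFb : ∀ q ∈ sqS, |F q| ≤ 1 := by
    intro q hq
    simp only [hF]
    rw [max_eq_left hq.1.1, max_eq_left hq.2.1, abs_of_nonneg (hΛnn hq.1.1 hq.2.1)]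
    exact le_trans (lam_le_min hC hT hq.1.1 hq.2.1) (le_trans (min_le_left _ _) hq.1.2)
  have hF0 : ∀ q ∈ sqS, q.1 = 0 ∨ q.2 = 0 → F q = 0 := by
    intro q hq h
    simp only [hF]
    rcases h with h | h
    · rw [h, max_self]
      exact lam_zero_left hC hT (le_max_right _ 0)
    · rw [h, max_self]
      exact lam_zero_right hC hT (le_max_right _ 0)
  have hae : ∀ᵐ q ∂μ, q ∈ sqS := by
    rw [ae_iff]
    exact hsqz'
  have hNcong : ∫ q, Λ q.1 q.2 ∂μ = ∫ q, F q ∂μ := by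
    refine integral_congr_ae ?_
    filter_upwards [hae] with q hq
    simp only [hF]
    rw [max_eq_left hq.1.1, max_eq_left hq.2.1]
  have hminm : Measurable (fun q : ℝ × ℝ => min q.1 q.2) := measurable_fst.min measurable_snd
  have hminb : ∀ q ∈ sqS, |min q.1 q.2| ≤ 1 := by
    intro q hq
    rw [abs_of_nonneg (le_min hq.1.1 hq.2.1)]
    exact le_trans (min_le_left _ _) hq.1.2
  have hmin0 : ∀ q ∈ sqS, q.1 = 0 ∨ q.2 = 0 → min q.1 q.2 = 0 := by
    intro q hq h
    rcases h with h | h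
    · rw [h, min_eq_left hq.2.1]
    · rw [h, min_eq_right hq.1.1]
  have hNdec : ∫ q, F q ∂μ =
      (∫ q in T0, F q ∂μ) + (∫ q in T1, F q ∂μ) + (∫ q in T2, F q ∂μ) :=
    decomp μ hsqz' hFmeas hFb hF0
  have hDdec : ∫ q : ℝ × ℝ, min q.1 q.2 ∂μ =
      (∫ q in T0, min q.1 q.2 ∂μ) + (∫ q in T1, min q.1 q.2 ∂μ) +
        ∫ q in T2, min q.1 q.2 ∂μ :=
    decomp μ hsqz' hminm hminb hmin0
  set G₁ : ℝ → ℝ := fun t => F (t, 1) with hG₁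
  set G₂ : ℝ → ℝ := fun t => F (1, t) with hG₂
  have hG₁m : Measurable G₁ := hFmeas.comp (measurable_id.prodMk measurable_const)
  have hG₂m : Measurable G₂ := hFmeas.comp (measurable_const.prodMk measurable_id)
  have hT0F : ∫ q in T0, F q ∂μ = a₀ * Λ 1 1 := by
    have e : ∫ q in T0, F q ∂μ = ∫ q in T0, q.1 * Λ 1 1 ∂μ := by
      refine setIntegral_congr_fun measurableSet_T0 ?_
      rintro q ⟨h1, h2, h3⟩
      simp only [hF]
      rw [max_eq_left h1.le, max_eq_left (h2 ▸ h1.le), ← h2]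
      calc Λ q.1 q.1 = Λ (q.1 * 1) (q.1 * 1) := by rw [mul_one]
        _ = q.1 * Λ 1 1 := lam_homog hT h1 zero_le_one zero_le_one
    rw [e, integral_mul_const]
  have hT1F : ∫ q in T1, F q ∂μ = a₁ * ∫ t, G₁ t ∂m₁ := by
    rw [← hm₁ G₁ hG₁m]
    refine setIntegral_congr_fun measurableSet_T1 ?_
    intro q hq
    have h1 : (0:ℝ) < q.1 := hq.1
    have h2 : q.1 < q.2 := hq.2.1
    have hq2 : (0:ℝ) < q.2 := lt_trans h1 h2
    have hd : (0:ℝ) < q.1 / q.2 := div_pos h1 hq2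
    simp only [hG₁, hF]
    rw [max_eq_left hd.le, max_eq_left zero_le_one, max_eq_left h1.le, max_eq_left hq2.le]
    calc Λ q.1 q.2 = Λ (q.2 * (q.1 / q.2)) (q.2 * 1) := by
          rw [mul_one, mul_comm, div_mul_cancel₀ _ (ne_of_gt hq2)]
      _ = q.2 * Λ (q.1 / q.2) 1 := lam_homog hT hq2 hd.le zero_le_one
  have hT2F : ∫ q in T2, F q ∂μ = a₂ * ∫ t, G₂ t ∂m₂ := by
    rw [← hm₂ G₂ hG₂m]
    refine setIntegral_congr_fun measurableSet_T2 ?_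
    rintro q ⟨h1, h2, h3⟩
    have hq1 : (0:ℝ) < q.1 := lt_trans h1 h2
    have hd : (0:ℝ) < q.2 / q.1 := div_pos h1 hq1
    simp only [hG₂, hF]
    rw [max_eq_left hd.le, max_eq_left zero_le_one, max_eq_left hq1.le, max_eq_left h1.le]
    calc Λ q.1 q.2 = Λ (q.1 * 1) (q.1 * (q.2 / q.1)) := by
          rw [mul_one, mul_comm q.1, div_mul_cancel₀ _ (ne_of_gt hq1)]
      _ = q.1 * Λ 1 (q.2 / q.1) := lam_homog hT hq1 zero_le_one hd.le
  have hm₁ae : ∀ᵐ t ∂m₁, t ∈ Ioo (0:ℝ) 1 := by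
    rw [ae_iff, show {t : ℝ | ¬ t ∈ Ioo (0:ℝ) 1} = (Ioo (0:ℝ) 1)ᶜ from rfl]
    exact hm₁c
  have hm₂ae : ∀ᵐ t ∂m₂, t ∈ Ioo (0:ℝ) 1 := by
    rw [ae_iff, show {t : ℝ | ¬ t ∈ Ioo (0:ℝ) 1} = (Ioo (0:ℝ) 1)ᶜ from rfl]
    exact hm₂c
  have hI₁ : ∫ t, G₁ t ∂m₁ = ∫ t, Λ t 1 ∂m₁ := by
    refine integral_congr_ae ?_
    filter_upwards [hm₁ae] with t ht
    simp only [hG₁, hF]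
    rw [max_eq_left ht.1.le, max_eq_left zero_le_one]
  have hI₂ : ∫ t, G₂ t ∂m₂ = ∫ t, Λ 1 t ∂m₂ := by
    refine integral_congr_ae ?_
    filter_upwards [hm₂ae] with t ht
    simp only [hG₂, hF]
    rw [max_eq_left ht.1.le, max_eq_left zero_le_one]
  have hT0m : ∫ q in T0, min q.1 q.2 ∂μ = a₀ := by
    refine setIntegral_congr_fun measurableSet_T0 ?_
    rintro q ⟨h1, h2, h3⟩
    show min q.1 q.2 = q.1
    rw [← h2, min_self]
  have hT1m : ∫ q in T1, min q.1 q.2 ∂μ = a₁ * ∫ t, t ∂m₁ := by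
    rw [← hm₁ (fun t => t) (measurable_id)]
    refine setIntegral_congr_fun measurableSet_T1 ?_
    intro q hq
    have h1 : (0:ℝ) < q.1 := hq.1
    have h2 : q.1 < q.2 := hq.2.1
    have hq2 : (0:ℝ) < q.2 := lt_trans h1 h2
    show min q.1 q.2 = q.2 * (q.1 / q.2)
    rw [min_eq_left h2.le, mul_comm, div_mul_cancel₀ _ (ne_of_gt hq2)]
  have hT2m : ∫ q in T2, min q.1 q.2 ∂μ = a₂ * ∫ t, t ∂m₂ := by
    rw [← hm₂ (fun t => t) (measurable_id)]
    refine setIntegral_congr_fun measurableSet_T2 ?_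
    rintro q ⟨h1, h2, h3⟩
    have hq1 : (0:ℝ) < q.1 := lt_trans h1 h2
    show min q.1 q.2 = q.1 * (q.2 / q.1)
    rw [min_eq_right h2.le, mul_comm, div_mul_cancel₀ _ (ne_of_gt hq1)]
  simp only [tdm]
  rw [hNcong, hNdec, hDdec, hT0F, hT1F, hT2F, hT0m, hT1m, hT2m, hI₁, hI₂]
  rw [show a₀ / S * Λ 1 1 + a₁ / S * (∫ t, Λ t 1 ∂m₁) + a₂ / S * (∫ t, Λ 1 t ∂m₂)
      = (a₀ * Λ 1 1 + a₁ * (∫ t, Λ t 1 ∂m₁) + a₂ * (∫ t, Λ 1 t ∂m₂)) / S from by ring,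
    show a₀ / S + a₁ / S * (∫ t, t ∂m₁) + a₂ / S * (∫ t, t ∂m₂)
      = (a₀ + a₁ * (∫ t, t ∂m₁) + a₂ * (∫ t, t ∂m₂)) / S from by ring,
    div_div_div_comm, div_self hSne, div_one]
end

section
/- Let C be a bivariate copula admitting a tail dependence function Λ. Then the supremum of λ_μ(C) over all tail generating measures μ equals max( lim_{t↓0} Λ(t,1)/t , lim_{t↓0} Λ(1,t)/t ) (both limits exist since the normalized functions are [0,1]-valued and decreasing on (0,1]). Moreover this supremum is already attained as the supremum of λ_μ(C) over the subfamily of tail generating measures concentrated on a single line segment { (u, au) : 0 < u ≤ min(1, 1/a) } for some a ∈ (0,∞). -/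
open MeasureTheory Filter Set

namespace TDM

variable {C Λ : ℝ → ℝ → ℝ}

lemma zero_mem : (0:ℝ) ∈ Icc (0:ℝ) 1 := ⟨le_refl 0, zero_le_one⟩
lemma one_mem : (1:ℝ) ∈ Icc (0:ℝ) 1 := ⟨zero_le_one, le_refl 1⟩

lemma C_mono_right (hC : IsCopula C) {u v v' : ℝ} (hu : u ∈ Icc (0:ℝ) 1)
    (hv : v ∈ Icc (0:ℝ) 1) (hv' : v' ∈ Icc (0:ℝ) 1) (h : v ≤ v') : C u v ≤ C u v' := by
  have h1 := hC.2.2 0 u v v' zero_mem hu hv hv' hu.1 h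
  have e1 := (hC.2.1 v hv).2.1
  have e2 := (hC.2.1 v' hv').2.1
  linarith

lemma C_mono_left (hC : IsCopula C) {u u' v : ℝ} (hu : u ∈ Icc (0:ℝ) 1)
    (hu' : u' ∈ Icc (0:ℝ) 1) (hv : v ∈ Icc (0:ℝ) 1) (h : u ≤ u') : C u v ≤ C u' v := by
  have h1 := hC.2.2 u u' 0 v hu hu' zero_mem hv h hv.1
  have e1 := (hC.2.1 u hu).1
  have e2 := (hC.2.1 u' hu').1
  linarith

lemma C_le_left (hC : IsCopula C) {u v : ℝ} (hu : u ∈ Icc (0:ℝ) 1)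
    (hv : v ∈ Icc (0:ℝ) 1) : C u v ≤ u := by
  have := C_mono_right hC hu hv one_mem hv.2
  have e := (hC.2.1 u hu).2.2.1
  linarith

lemma C_le_right (hC : IsCopula C) {u v : ℝ} (hu : u ∈ Icc (0:ℝ) 1)
    (hv : v ∈ Icc (0:ℝ) 1) : C u v ≤ v := by
  have := C_mono_left hC hu one_mem hv hu.2
  have e := (hC.2.1 v hv).2.2.2
  linarith

lemma C_lip_left (hC : IsCopula C) {u u' v : ℝ} (hu : u ∈ Icc (0:ℝ) 1)
    (hu' : u' ∈ Icc (0:ℝ) 1) (hv : v ∈ Icc (0:ℝ) 1) (h : u ≤ u') :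
    C u' v - C u v ≤ u' - u := by
  have h1 := hC.2.2 u u' v 1 hu hu' hv one_mem h hv.2
  have e1 := (hC.2.1 u hu).2.2.1
  have e2 := (hC.2.1 u' hu').2.2.1
  linarith

lemma C_lip_right (hC : IsCopula C) {u v v' : ℝ} (hu : u ∈ Icc (0:ℝ) 1)
    (hv : v ∈ Icc (0:ℝ) 1) (hv' : v' ∈ Icc (0:ℝ) 1) (h : v ≤ v') :
    C u v' - C u v ≤ v' - v := by
  have h1 := hC.2.2 u 1 v v' hu one_mem hv hv' hu.2 h
  have e1 := (hC.2.1 v hv).2.2.2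
  have e2 := (hC.2.1 v' hv').2.2.2
  linarith

/-- Eventually `p*u` and `p*v` are in the unit interval. -/
lemma eventually_small (u v : ℝ) (hu : 0 ≤ u) (hv : 0 ≤ v) :
    ∀ᶠ p in nhdsWithin (0:ℝ) (Ioi 0),
      0 < p ∧ p * u ∈ Icc (0:ℝ) 1 ∧ p * v ∈ Icc (0:ℝ) 1 := by
  have hδ : (0:ℝ) < (u + v + 1)⁻¹ := by positivity
  filter_upwards [Ioo_mem_nhdsGT_of_mem (⟨le_refl 0, hδ⟩ : (0:ℝ) ∈ Ico 0 (u+v+1)⁻¹)]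
    with p hp
  obtain ⟨hp0, hp1⟩ := hp
  have hc : (u + v + 1) * (u+v+1)⁻¹ = 1 := by
    field_simp
  have h1 : p * u ≤ 1 := by nlinarith
  have h2 : p * v ≤ 1 := by nlinarith
  exact ⟨hp0, ⟨by positivity, h1⟩, ⟨by positivity, h2⟩⟩

lemma Λ_nonneg (hC : IsCopula C) (hΛ : HasTDF C Λ) {u v : ℝ} (hu : 0 ≤ u) (hv : 0 ≤ v) :
    0 ≤ Λ u v := by
  refine ge_of_tendsto (hΛ u v hu hv) ?_
  filter_upwards [eventually_small u v hu hv] with p hp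
  obtain ⟨hp0, h1, h2⟩ := hp
  exact div_nonneg (hC.1 _ h1 _ h2).1 hp0.le

lemma Λ_le_min (hC : IsCopula C) (hΛ : HasTDF C Λ) {u v : ℝ} (hu : 0 ≤ u) (hv : 0 ≤ v) :
    Λ u v ≤ min u v := by
  refine le_of_tendsto (hΛ u v hu hv) ?_
  filter_upwards [eventually_small u v hu hv] with p hp
  obtain ⟨hp0, h1, h2⟩ := hp
  have ha : C (p*u) (p*v) ≤ p * u := C_le_left hC h1 h2
  have hb : C (p*u) (p*v) ≤ p * v := C_le_right hC h1 h2
  rw [div_le_iff₀ hp0]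
  rcases min_cases u v with ⟨he, _⟩ | ⟨he, _⟩ <;> rw [he] <;> linarith

lemma Λ_mono (hC : IsCopula C) (hΛ : HasTDF C Λ) {u u' v v' : ℝ} (hu : 0 ≤ u) (hv : 0 ≤ v)
    (h1 : u ≤ u') (h2 : v ≤ v') : Λ u v ≤ Λ u' v' := by
  have hu' : (0:ℝ) ≤ u' := hu.trans h1
  have hv' : (0:ℝ) ≤ v' := hv.trans h2
  refine le_of_tendsto_of_tendsto (hΛ u v hu hv) (hΛ u' v' hu' hv') ?_
  filter_upwards [eventually_small u v hu hv, eventually_small u' v' hu' hv']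
    with p hp hp'
  obtain ⟨hp0, ha, hb⟩ := hp
  obtain ⟨-, ha', hb'⟩ := hp'
  have mu : p * u ≤ p * u' := by nlinarith
  have mv : p * v ≤ p * v' := by nlinarith
  have s1 : C (p*u) (p*v) ≤ C (p*u') (p*v) := C_mono_left hC ha ha' hb mu
  have s2 : C (p*u') (p*v) ≤ C (p*u') (p*v') := C_mono_right hC ha' hb hb' mv
  show C (p*u) (p*v) / p ≤ C (p*u') (p*v') / p
  rw [div_le_div_iff₀ hp0 hp0]
  nlinarith

lemma Λ_hom (hΛ : HasTDF C Λ) {c u v : ℝ} (hc : 0 < c) (hu : 0 ≤ u) (hv : 0 ≤ v) :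
    Λ (c * u) (c * v) = c * Λ u v := by
  have h1 : Tendsto (fun p : ℝ => C (p * (c*u)) (p * (c*v)) / p)
      (nhdsWithin (0:ℝ) (Ioi 0)) (nhds (Λ (c*u) (c*v))) :=
    hΛ _ _ (by positivity) (by positivity)
  have h2 : Tendsto (fun p : ℝ => p * c) (nhdsWithin (0:ℝ) (Ioi 0))
      (nhdsWithin (0:ℝ) (Ioi 0)) := by
    have ha : Tendsto (fun p : ℝ => p * c) (nhdsWithin (0:ℝ) (Ioi 0)) (nhds 0) := by
      have hcont : Continuous (fun p : ℝ => p * c) := continuous_id.mul continuous_const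
      have h := (hcont.tendsto (0:ℝ)).mono_left (nhdsWithin_le_nhds (s := Ioi (0:ℝ)))
      simpa using h
    refine tendsto_nhdsWithin_of_tendsto_nhds_of_eventually_within _ ha ?_
    filter_upwards [self_mem_nhdsWithin] with p (hp : (0:ℝ) < p)
    exact mul_pos hp hc
  have h3 : Tendsto (fun p : ℝ => c * (C ((p*c) * u) ((p*c) * v) / (p*c)))
      (nhdsWithin (0:ℝ) (Ioi 0)) (nhds (c * Λ u v)) :=
    ((hΛ u v hu hv).comp h2).const_mul c
  have heq : ∀ᶠ p in nhdsWithin (0:ℝ) (Ioi 0),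
      c * (C ((p*c) * u) ((p*c) * v) / (p*c)) = C (p * (c*u)) (p * (c*v)) / p := by
    filter_upwards [self_mem_nhdsWithin] with p (hp : (0:ℝ) < p)
    have e1 : (p*c) * u = p * (c*u) := by ring
    have e2 : (p*c) * v = p * (c*v) := by ring
    rw [e1, e2]
    field_simp
  exact tendsto_nhds_unique h1 (h3.congr' heq)

lemma Λ_lip_left (hC : IsCopula C) (hΛ : HasTDF C Λ) {u u' v : ℝ}
    (hu : 0 ≤ u) (hu' : 0 ≤ u') (hv : 0 ≤ v) :
    |Λ u v - Λ u' v| ≤ |u - u'| := by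
  have key : ∀ a b : ℝ, 0 ≤ a → a ≤ b → Λ b v - Λ a v ≤ b - a := by
    intro a b ha hab
    have hb : (0:ℝ) ≤ b := ha.trans hab
    refine le_of_tendsto (((hΛ b v hb hv).sub (hΛ a v ha hv))) ?_
    filter_upwards [eventually_small a v ha hv, eventually_small b v hb hv]
      with p hp hq
    obtain ⟨hp0, ha1, hv1⟩ := hp
    obtain ⟨-, hb1, -⟩ := hq
    have hl := C_lip_left hC ha1 hb1 hv1 (by nlinarith)
    show C (p*b) (p*v) / p - C (p*a) (p*v) / p ≤ b - a
    rw [div_sub_div_same, div_le_iff₀ hp0]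
    nlinarith
  rcases le_total u u' with h | h
  · have k1 := key u u' hu h
    have k2 := Λ_mono hC hΛ hu hv h le_rfl
    have e : u' - u ≤ |u - u'| := by rw [abs_sub_comm]; exact le_abs_self _
    rw [abs_sub_le_iff]
    constructor <;> [skip; skip] <;> linarith [abs_nonneg (u - u')]
  · have k1 := key u' u hu' h
    have k2 := Λ_mono hC hΛ hu' hv h le_rfl
    have e : u - u' ≤ |u - u'| := le_abs_self _
    rw [abs_sub_le_iff]
    constructor <;> linarith [abs_nonneg (u - u')]

lemma Λ_lip_right (hC : IsCopula C) (hΛ : HasTDF C Λ) {u v v' : ℝ}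
    (hu : 0 ≤ u) (hv : 0 ≤ v) (hv' : 0 ≤ v') :
    |Λ u v - Λ u v'| ≤ |v - v'| := by
  have key : ∀ a b : ℝ, 0 ≤ a → a ≤ b → Λ u b - Λ u a ≤ b - a := by
    intro a b ha hab
    have hb : (0:ℝ) ≤ b := ha.trans hab
    refine le_of_tendsto (((hΛ u b hu hb).sub (hΛ u a hu ha))) ?_
    filter_upwards [eventually_small u a hu ha, eventually_small u b hu hb]
      with p hp hq
    obtain ⟨hp0, hu1, ha1⟩ := hp
    obtain ⟨-, -, hb1⟩ := hq
    have hl := C_lip_right hC hu1 ha1 hb1 (by nlinarith)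
    show C (p*u) (p*b) / p - C (p*u) (p*a) / p ≤ b - a
    rw [div_sub_div_same, div_le_iff₀ hp0]
    nlinarith
  rcases le_total v v' with h | h
  · have k1 := key v v' hv h
    have k2 := Λ_mono hC hΛ hu hv le_rfl h
    have e : v' - v ≤ |v - v'| := by rw [abs_sub_comm]; exact le_abs_self _
    rw [abs_sub_le_iff]
    constructor <;> linarith [abs_nonneg (v - v')]
  · have k1 := key v' v hv' h
    have k2 := Λ_mono hC hΛ hu hv' le_rfl h
    have e : v - v' ≤ |v - v'| := le_abs_self _
    rw [abs_sub_le_iff]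
    constructor <;> linarith [abs_nonneg (v - v')]

/-- clamp to [0,1] -/
noncomputable def cl (x : ℝ) : ℝ := min (max x 0) 1

lemma cl_mem (x : ℝ) : cl x ∈ Icc (0:ℝ) 1 :=
  ⟨le_min (le_max_right x 0) zero_le_one, min_le_right _ _⟩

lemma cl_eq {x : ℝ} (hx : x ∈ Icc (0:ℝ) 1) : cl x = x := by
  rw [cl, max_eq_left hx.1, min_eq_left hx.2]

lemma cl_lip (x y : ℝ) : |cl x - cl y| ≤ |x - y| := by
  have h1 : |min (max x 0) 1 - min (max y 0) 1| ≤ max |max x 0 - max y 0| |1 - (1:ℝ)| :=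
    abs_min_sub_min_le_max _ _ _ _
  have h2 : |max x 0 - max y 0| ≤ |x - y| := abs_max_sub_max_le_abs _ _ _
  have h3 : |(1:ℝ) - 1| = 0 := by norm_num
  rw [cl, cl]
  calc |min (max x 0) 1 - min (max y 0) 1| ≤ max |max x 0 - max y 0| |1 - (1:ℝ)| := h1
    _ ≤ max |x - y| 0 := by rw [h3]; exact max_le_max h2 le_rfl
    _ = |x - y| := max_eq_left (abs_nonneg _)

end TDM

open TDM in
theorem maximal_tdm_formula (C Λ : ℝ → ℝ → ℝ)
    (hC : IsCopula C) (hΛ : HasTDF C Λ) :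
    ∃ l₁ l₂ : ℝ,
      Tendsto (fun t => Λ t 1 / t) (nhdsWithin (0:ℝ) (Ioi 0)) (nhds l₁) ∧
      Tendsto (fun t => Λ 1 t / t) (nhdsWithin (0:ℝ) (Ioi 0)) (nhds l₂) ∧
      sSup {x : ℝ | ∃ μ : Measure (ℝ × ℝ), IsTailGenMeasure μ ∧ x = tdm Λ μ} = max l₁ l₂ ∧
      sSup {x : ℝ | ∃ (a : ℝ) (μ : Measure (ℝ × ℝ)), 0 < a ∧ IsTailGenMeasure μ ∧
          μ ({q : ℝ × ℝ | ∃ u : ℝ, 0 < u ∧ u ≤ min 1 (1 / a) ∧ q = (u, a * u)}ᶜ) = 0 ∧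
          x = tdm Λ μ} = max l₁ l₂ := by
  classical
  set Λ₁ : ℝ → ℝ := fun t => Λ 1 (max t 1) with hΛ₁def
  set Λ₂ : ℝ → ℝ := fun t => Λ (max t 1) 1 with hΛ₂def
  have hΛ₁bdd : BddAbove (range Λ₁) := by
    refine ⟨1, ?_⟩
    rintro x ⟨t, rfl⟩
    have h := Λ_le_min hC hΛ zero_le_one (zero_le_one.trans (le_max_right t 1))
    exact h.trans (min_le_left _ _)
  have hΛ₂bdd : BddAbove (range Λ₂) := by
    refine ⟨1, ?_⟩
    rintro x ⟨t, rfl⟩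
    have h := Λ_le_min hC hΛ (zero_le_one.trans (le_max_right t 1)) zero_le_one
    exact h.trans (min_le_right _ _)
  have hΛ₁mono : Monotone Λ₁ := fun s t hst =>
    Λ_mono hC hΛ zero_le_one (zero_le_one.trans (le_max_right s 1)) le_rfl
      (max_le_max hst le_rfl)
  have hΛ₂mono : Monotone Λ₂ := fun s t hst =>
    Λ_mono hC hΛ (zero_le_one.trans (le_max_right s 1)) zero_le_one
      (max_le_max hst le_rfl) le_rfl
  set l₁ : ℝ := ⨆ t, Λ₁ t with hl₁def
  set l₂ : ℝ := ⨆ t, Λ₂ t with hl₂def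
  set M : ℝ := max l₁ l₂ with hMdef
  have hΛ₁le : ∀ s : ℝ, 0 ≤ s → Λ 1 s ≤ l₁ := by
    intro s hs
    have h1 : Λ 1 s ≤ Λ₁ s := Λ_mono hC hΛ zero_le_one hs le_rfl (le_max_left s 1)
    exact h1.trans (le_ciSup hΛ₁bdd s)
  have hΛ₂le : ∀ s : ℝ, 0 ≤ s → Λ s 1 ≤ l₂ := by
    intro s hs
    have h1 : Λ s 1 ≤ Λ₂ s := Λ_mono hC hΛ hs zero_le_one (le_max_left s 1) le_rfl
    exact h1.trans (le_ciSup hΛ₂bdd s)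
  have hl₁nonneg : (0:ℝ) ≤ l₁ :=
    (Λ_nonneg hC hΛ zero_le_one zero_le_one).trans (hΛ₁le 1 zero_le_one)
  have hM0 : (0:ℝ) ≤ M := hl₁nonneg.trans (le_max_left _ _)
  -- the two limits
  have hT1 : Tendsto (fun t => Λ t 1 / t) (nhdsWithin (0:ℝ) (Ioi 0)) (nhds l₁) := by
    have h1 : Tendsto Λ₁ atTop (nhds l₁) := tendsto_atTop_ciSup hΛ₁mono hΛ₁bdd
    have h2 : Tendsto (fun t : ℝ => Λ₁ t⁻¹) (nhdsWithin (0:ℝ) (Ioi 0)) (nhds l₁) :=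
      h1.comp tendsto_inv_nhdsGT_zero
    refine Tendsto.congr' ?_ h2
    filter_upwards [Ioo_mem_nhdsGT_of_mem (⟨le_refl 0, zero_lt_one⟩ : (0:ℝ) ∈ Ico 0 1)]
      with t ht
    obtain ⟨ht0, ht1⟩ := ht
    have hinv : (1:ℝ) ≤ t⁻¹ := one_le_inv₀ ht0 |>.mpr ht1.le
    have e1 : Λ₁ t⁻¹ = Λ 1 t⁻¹ := by
      show Λ 1 (max t⁻¹ 1) = Λ 1 t⁻¹
      rw [max_eq_left hinv]
    have e2 : Λ t 1 = t * Λ 1 t⁻¹ := by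
      have h := Λ_hom hΛ ht0 zero_le_one (inv_nonneg.mpr ht0.le)
      rw [mul_one, mul_inv_cancel₀ ht0.ne'] at h
      exact h
    rw [e1, e2]
    field_simp
  have hT2 : Tendsto (fun t => Λ 1 t / t) (nhdsWithin (0:ℝ) (Ioi 0)) (nhds l₂) := by
    have h1 : Tendsto Λ₂ atTop (nhds l₂) := tendsto_atTop_ciSup hΛ₂mono hΛ₂bdd
    have h2 : Tendsto (fun t : ℝ => Λ₂ t⁻¹) (nhdsWithin (0:ℝ) (Ioi 0)) (nhds l₂) :=
      h1.comp tendsto_inv_nhdsGT_zero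
    refine Tendsto.congr' ?_ h2
    filter_upwards [Ioo_mem_nhdsGT_of_mem (⟨le_refl 0, zero_lt_one⟩ : (0:ℝ) ∈ Ico 0 1)]
      with t ht
    obtain ⟨ht0, ht1⟩ := ht
    have hinv : (1:ℝ) ≤ t⁻¹ := one_le_inv₀ ht0 |>.mpr ht1.le
    have e1 : Λ₂ t⁻¹ = Λ t⁻¹ 1 := by
      show Λ (max t⁻¹ 1) 1 = Λ t⁻¹ 1
      rw [max_eq_left hinv]
    have e2 : Λ 1 t = t * Λ t⁻¹ 1 := by
      have h := Λ_hom hΛ ht0 (inv_nonneg.mpr ht0.le) zero_le_one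
      rw [mul_one, mul_inv_cancel₀ ht0.ne'] at h
      exact h
    rw [e1, e2]
    field_simp
  -- key pointwise bound
  have hkey : ∀ u v : ℝ, 0 ≤ u → 0 ≤ v → Λ u v ≤ M * min u v := by
    intro u v hu hv
    rcases eq_or_lt_of_le (le_min hu hv : (0:ℝ) ≤ min u v) with hm | hm
    · have h1 : Λ u v ≤ min u v := Λ_le_min hC hΛ hu hv
      rw [← hm] at h1 ⊢
      simpa using h1
    · rcases le_total u v with huv | huv
      · have hmin : min u v = u := min_eq_left huv
        have hu0 : 0 < u := by rw [hmin] at hm; exact hm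
        have hdiv : (0:ℝ) ≤ v / u := div_nonneg hv hu0.le
        have hh := Λ_hom hΛ hu0 zero_le_one hdiv
        rw [mul_one] at hh
        rw [show u * (v / u) = v by field_simp] at hh
        rw [hmin, hh]
        have h3 : Λ 1 (v/u) ≤ l₁ := hΛ₁le _ hdiv
        have h4 : l₁ ≤ M := le_max_left _ _
        nlinarith
      · have hmin : min u v = v := min_eq_right huv
        have hv0 : 0 < v := by rw [hmin] at hm; exact hm
        have hdiv : (0:ℝ) ≤ u / v := div_nonneg hu hv0.le
        have hh := Λ_hom hΛ hv0 hdiv zero_le_one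
        rw [mul_one] at hh
        rw [show v * (u / v) = u by field_simp] at hh
        rw [hmin, hh]
        have h3 : Λ (u/v) 1 ≤ l₂ := hΛ₂le _ hdiv
        have h4 : l₂ ≤ M := le_max_right _ _
        nlinarith
  -- uniform bound on tdm
  have hbound : ∀ μ : Measure (ℝ × ℝ), IsTailGenMeasure μ → tdm Λ μ ≤ M := by
    rintro μ ⟨hprob, hsq, haxes⟩
    haveI := hprob
    have hae : ∀ᵐ q ∂μ, q ∈ Icc (0:ℝ) 1 ×ˢ Icc (0:ℝ) 1 := by
      rw [ae_iff]
      exact hsq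
    set g : ℝ × ℝ → ℝ := fun q => Λ (cl q.1) (cl q.2) with hgdef
    have hgcont : Continuous g := by
      refine (LipschitzWith.of_dist_le_mul (K := 2) ?_).continuous
      intro q q'
      have l1 : |Λ (cl q.1) (cl q.2) - Λ (cl q'.1) (cl q.2)| ≤ |cl q.1 - cl q'.1| :=
        Λ_lip_left hC hΛ (cl_mem q.1).1 (cl_mem q'.1).1 (cl_mem q.2).1
      have l2 : |Λ (cl q'.1) (cl q.2) - Λ (cl q'.1) (cl q'.2)| ≤ |cl q.2 - cl q'.2| :=
        Λ_lip_right hC hΛ (cl_mem q'.1).1 (cl_mem q.2).1 (cl_mem q'.2).1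
      have l3 := cl_lip q.1 q'.1
      have l4 := cl_lip q.2 q'.2
      have d1 : dist q.1 q'.1 ≤ dist q q' := by
        rw [Prod.dist_eq]; exact le_max_left _ _
      have d2 : dist q.2 q'.2 ≤ dist q q' := by
        rw [Prod.dist_eq]; exact le_max_right _ _
      rw [Real.dist_eq] at d1 d2 ⊢
      have tri : |g q - g q'| ≤ |Λ (cl q.1) (cl q.2) - Λ (cl q'.1) (cl q.2)| +
          |Λ (cl q'.1) (cl q.2) - Λ (cl q'.1) (cl q'.2)| := by
        have := abs_sub_le (Λ (cl q.1) (cl q.2)) (Λ (cl q'.1) (cl q.2)) (Λ (cl q'.1) (cl q'.2))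
        simpa [hgdef] using this
      have : ((2:NNReal):ℝ) = 2 := by norm_num
      rw [this]
      linarith
    have hgeq : (fun q : ℝ × ℝ => Λ q.1 q.2) =ᶠ[ae μ] g := by
      filter_upwards [hae] with q hq
      show Λ q.1 q.2 = Λ (cl q.1) (cl q.2)
      rw [cl_eq hq.1, cl_eq hq.2]
    have hg_int : Integrable g μ := by
      refine Integrable.mono' (integrable_const 1) hgcont.aestronglyMeasurable ?_
      refine Eventually.of_forall fun q => ?_
      rw [Real.norm_eq_abs, abs_le]
      constructor
      · have := Λ_nonneg hC hΛ (cl_mem q.1).1 (cl_mem q.2).1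
        show (-1:ℝ) ≤ g q
        simp only [hgdef]
        linarith
      · have h1 := Λ_le_min hC hΛ (cl_mem q.1).1 (cl_mem q.2).1
        have h2 : min (cl q.1) (cl q.2) ≤ 1 := (min_le_left _ _).trans (cl_mem q.1).2
        show g q ≤ 1
        simp only [hgdef]
        linarith
    have hm_cont : Continuous (fun q : ℝ × ℝ => min q.1 q.2) :=
      continuous_fst.min continuous_snd
    have hm_int : Integrable (fun q : ℝ × ℝ => min q.1 q.2) μ := by
      refine Integrable.mono' (integrable_const 1) hm_cont.aestronglyMeasurable ?_
      filter_upwards [hae] with q hq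
      rw [Real.norm_eq_abs, abs_le]
      refine ⟨?_, (min_le_left _ _).trans hq.1.2⟩
      have := le_min hq.1.1 hq.2.1
      linarith
    have hm_nonneg : (0:ℝ × ℝ → ℝ) ≤ᶠ[ae μ] fun q : ℝ × ℝ => min q.1 q.2 := by
      filter_upwards [hae] with q hq
      exact le_min hq.1.1 hq.2.1
    have hm_pos : 0 < ∫ q : ℝ × ℝ, min q.1 q.2 ∂μ := by
      rcases lt_or_eq_of_le (integral_nonneg_of_ae hm_nonneg) with h | h
      · exact h
      · exfalso
        have hzero : (fun q : ℝ × ℝ => min q.1 q.2) =ᶠ[ae μ] 0 :=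
          (integral_eq_zero_iff_of_nonneg_ae hm_nonneg hm_int).mp h.symm
        have hA : ∀ᵐ q ∂μ, q ∈ {q : ℝ × ℝ | q.1 = 0 ∨ q.2 = 0} := by
          filter_upwards [hae, hzero] with q hq hz
          have hz' : min q.1 q.2 = 0 := hz
          rcases le_total q.1 q.2 with hle | hle
          · left
            rw [min_eq_left hle] at hz'
            exact hz'
          · right
            rw [min_eq_right hle] at hz'
            exact hz'
        have hcompl : μ ({q : ℝ × ℝ | q.1 = 0 ∨ q.2 = 0}ᶜ) = 0 := by
          rw [ae_iff] at hA
          exact hA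
        have h1 : (1:ENNReal) ≤ μ {q : ℝ × ℝ | q.1 = 0 ∨ q.2 = 0} := by
          have hle := measure_union_le (μ := μ) {q : ℝ × ℝ | q.1 = 0 ∨ q.2 = 0}
            ({q : ℝ × ℝ | q.1 = 0 ∨ q.2 = 0}ᶜ)
          rw [union_compl_self, measure_univ, hcompl, add_zero] at hle
          exact hle
        exact absurd haxes (not_lt.mpr h1)
    have hgle : g ≤ᶠ[ae μ] fun q : ℝ × ℝ => M * min q.1 q.2 := by
      filter_upwards [hae] with q hq
      have e : g q = Λ q.1 q.2 := by
        show Λ (cl q.1) (cl q.2) = Λ q.1 q.2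
        rw [cl_eq hq.1, cl_eq hq.2]
      rw [e]
      exact hkey q.1 q.2 hq.1.1 hq.2.1
    have hint : ∫ q : ℝ × ℝ, Λ q.1 q.2 ∂μ ≤ M * ∫ q : ℝ × ℝ, min q.1 q.2 ∂μ := by
      rw [integral_congr_ae hgeq, ← integral_const_mul]
      exact integral_mono_ae hg_int (hm_int.const_mul M) hgle
    rw [tdm, div_le_iff₀ hm_pos]
    linarith
  -- dirac values
  have hdirac_val : ∀ x : ℝ × ℝ, tdm Λ (Measure.dirac x) = Λ x.1 x.2 / min x.1 x.2 := by
    intro x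
    rw [tdm, integral_dirac, integral_dirac]
  have hdirac_tgm : ∀ u v : ℝ, 0 < u → u ≤ 1 → 0 < v → v ≤ 1 →
      IsTailGenMeasure (Measure.dirac (u, v)) := by
    intro u v hu0 hu1 hv0 hv1
    refine ⟨inferInstance, ?_, ?_⟩
    · have hmem : (u, v) ∈ Icc (0:ℝ) 1 ×ˢ Icc (0:ℝ) 1 := ⟨⟨hu0.le, hu1⟩, ⟨hv0.le, hv1⟩⟩
      rw [Measure.dirac_apply, Set.indicator_of_notMem (notMem_compl_iff.mpr hmem)]
    · have hmem : (u, v) ∉ {q : ℝ × ℝ | q.1 = 0 ∨ q.2 = 0} := by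
        simp [hu0.ne', hv0.ne']
      rw [Measure.dirac_apply, Set.indicator_of_notMem hmem]
      exact zero_lt_one
  -- elements of the line family, type 1 : value Λ 1 b for b ≥ 1
  have helem₁ : ∀ b : ℝ, 1 ≤ b → ∃ (a : ℝ) (μ : Measure (ℝ × ℝ)), 0 < a ∧
      IsTailGenMeasure μ ∧
      μ ({q : ℝ × ℝ | ∃ u : ℝ, 0 < u ∧ u ≤ min 1 (1 / a) ∧ q = (u, a * u)}ᶜ) = 0 ∧
      Λ 1 b = tdm Λ μ := by
    intro b hb
    have hb0 : (0:ℝ) < b := lt_of_lt_of_le zero_lt_one hb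
    have hbinv0 : (0:ℝ) < b⁻¹ := inv_pos.mpr hb0
    have hbinv1 : b⁻¹ ≤ 1 := inv_le_one_of_one_le₀ hb
    refine ⟨b, Measure.dirac (b⁻¹, 1), hb0, hdirac_tgm b⁻¹ 1 hbinv0 hbinv1 zero_lt_one le_rfl,
      ?_, ?_⟩
    · have hmem : ((b⁻¹ : ℝ), (1:ℝ)) ∈
          {q : ℝ × ℝ | ∃ u : ℝ, 0 < u ∧ u ≤ min 1 (1 / b) ∧ q = (u, b * u)} := by
        refine ⟨b⁻¹, hbinv0, le_min hbinv1 (by rw [one_div]), ?_⟩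
        rw [mul_inv_cancel₀ hb0.ne']
      rw [Measure.dirac_apply, Set.indicator_of_notMem (notMem_compl_iff.mpr hmem)]
    · rw [hdirac_val]
      show Λ 1 b = Λ b⁻¹ 1 / min b⁻¹ 1
      have e1 : min b⁻¹ 1 = b⁻¹ := min_eq_left hbinv1
      have e2 : Λ b⁻¹ 1 = b⁻¹ * Λ 1 b := by
        have h := Λ_hom hΛ hbinv0 zero_le_one hb0.le
        rw [mul_one, inv_mul_cancel₀ hb0.ne'] at h
        exact h
      rw [e1, e2]
      field_simp
  -- elements of the line family, type 2 : value Λ b 1 for b ≥ 1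
  have helem₂ : ∀ b : ℝ, 1 ≤ b → ∃ (a : ℝ) (μ : Measure (ℝ × ℝ)), 0 < a ∧
      IsTailGenMeasure μ ∧
      μ ({q : ℝ × ℝ | ∃ u : ℝ, 0 < u ∧ u ≤ min 1 (1 / a) ∧ q = (u, a * u)}ᶜ) = 0 ∧
      Λ b 1 = tdm Λ μ := by
    intro b hb
    have hb0 : (0:ℝ) < b := lt_of_lt_of_le zero_lt_one hb
    have hbinv0 : (0:ℝ) < b⁻¹ := inv_pos.mpr hb0
    have hbinv1 : b⁻¹ ≤ 1 := inv_le_one_of_one_le₀ hb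
    refine ⟨b⁻¹, Measure.dirac (1, b⁻¹), hbinv0,
      hdirac_tgm 1 b⁻¹ zero_lt_one le_rfl hbinv0 hbinv1, ?_, ?_⟩
    · have hmem : ((1:ℝ), (b⁻¹ : ℝ)) ∈
          {q : ℝ × ℝ | ∃ u : ℝ, 0 < u ∧ u ≤ min 1 (1 / b⁻¹) ∧ q = (u, b⁻¹ * u)} := by
        refine ⟨1, zero_lt_one, le_min le_rfl ?_, ?_⟩
        · rw [one_div, inv_inv]; exact hb
        · rw [mul_one]
      rw [Measure.dirac_apply, Set.indicator_of_notMem (notMem_compl_iff.mpr hmem)]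
    · rw [hdirac_val]
      show Λ b 1 = Λ 1 b⁻¹ / min 1 b⁻¹
      have e1 : min 1 b⁻¹ = b⁻¹ := min_eq_right hbinv1
      have e2 : Λ 1 b⁻¹ = b⁻¹ * Λ b 1 := by
        have h := Λ_hom hΛ hbinv0 hb0.le zero_le_one
        rw [mul_one, inv_mul_cancel₀ hb0.ne'] at h
        exact h
      rw [e1, e2]
      field_simp
  -- near-maximality within the line family
  have hclose : ∀ w : ℝ, w < M → ∃ (a : ℝ) (μ : Measure (ℝ × ℝ)), 0 < a ∧
      IsTailGenMeasure μ ∧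
      μ ({q : ℝ × ℝ | ∃ u : ℝ, 0 < u ∧ u ≤ min 1 (1 / a) ∧ q = (u, a * u)}ᶜ) = 0 ∧
      w < tdm Λ μ := by
    intro w hw
    rcases le_total l₂ l₁ with hll | hll
    · rw [hMdef, max_eq_left hll] at hw
      obtain ⟨t, ht⟩ := exists_lt_of_lt_ciSup (hl₁def ▸ hw)
      obtain ⟨a, μ, ha, htgm, hline, hval⟩ := helem₁ (max t 1) (le_max_right t 1)
      exact ⟨a, μ, ha, htgm, hline, by rw [← hval]; exact ht⟩
    · rw [hMdef, max_eq_right hll] at hw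
      obtain ⟨t, ht⟩ := exists_lt_of_lt_ciSup (hl₂def ▸ hw)
      obtain ⟨a, μ, ha, htgm, hline, hval⟩ := helem₂ (max t 1) (le_max_right t 1)
      exact ⟨a, μ, ha, htgm, hline, by rw [← hval]; exact ht⟩
  refine ⟨l₁, l₂, hT1, hT2, ?_, ?_⟩
  · refine csSup_eq_of_forall_le_of_forall_lt_exists_gt ?_ ?_ ?_
    · obtain ⟨a, μ, _, htgm, _, hval⟩ := helem₁ 1 le_rfl
      exact ⟨Λ 1 1, μ, htgm, hval⟩
    · rintro x ⟨μ, htgm, rfl⟩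
      exact hbound μ htgm
    · intro w hw
      obtain ⟨a, μ, _, htgm, _, hval⟩ := hclose w hw
      exact ⟨tdm Λ μ, ⟨μ, htgm, rfl⟩, hval⟩
  · refine csSup_eq_of_forall_le_of_forall_lt_exists_gt ?_ ?_ ?_
    · obtain ⟨a, μ, ha, htgm, hline, hval⟩ := helem₁ 1 le_rfl
      exact ⟨Λ 1 1, a, μ, ha, htgm, hline, hval⟩
    · rintro x ⟨a, μ, ha, htgm, hline, rfl⟩
      exact hbound μ htgm
    · intro w hw
      obtain ⟨a, μ, ha, htgm, hline, hval⟩ := hclose w hw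
      exact ⟨tdm Λ μ, ⟨a, μ, ha, htgm, hline, rfl⟩, hval⟩
end

section
/- Let C be a bivariate copula admitting a tail dependence function Λ, and let φ : [0,1] → [0,1] be an admissible path, i.e. p² ≤ φ(p) ≤ 1 for all p ∈ [0,1], φ is continuous in a neighborhood of 0, and b := lim_{p↓0} φ(p)/p exists in (0,∞). Then: (1) the φ-tail dependence coefficient χ_φ(C) = lim_{p↓0} C(φ(p), p²/φ(p))/p exists and equals Λ(b, 1/b); (2) the φ-normalized tail dependence coefficient κ_φ(C) = lim_{p↓0} C(φ(p), p²/φ(p)) / min(φ(p), p²/φ(p)) exists and equals Λ(b,1/b)/min(b,1/b); and (3) 0 ≤ χ_φ(C) ≤ κ_φ(C) ≤ 1. -/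
open MeasureTheory Filter Set

private lemma cop_lip_s17 {C : ℝ → ℝ → ℝ} (hC : IsCopula C) {u u' v v' : ℝ}
    (hu : u ∈ Icc (0:ℝ) 1) (hu' : u' ∈ Icc (0:ℝ) 1)
    (hv : v ∈ Icc (0:ℝ) 1) (hv' : v' ∈ Icc (0:ℝ) 1) :
    |C u v - C u' v'| ≤ |u - u'| + |v - v'| := by
  obtain ⟨hbox, hmarg, h2⟩ := hC
  have h01 : (0:ℝ) ∈ Icc (0:ℝ) 1 := ⟨le_refl 0, zero_le_one⟩
  have h11 : (1:ℝ) ∈ Icc (0:ℝ) 1 := ⟨zero_le_one, le_refl 1⟩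
  have key1 : ∀ a ∈ Icc (0:ℝ) 1, ∀ a' ∈ Icc (0:ℝ) 1, ∀ w ∈ Icc (0:ℝ) 1,
      a ≤ a' → C a w ≤ C a' w ∧ C a' w - C a w ≤ a' - a := by
    intro a ha a' ha' w hw hle
    have e1 := h2 a a' 0 w ha ha' h01 hw hle hw.1
    have e2 := h2 a a' w 1 ha ha' hw h11 hle hw.2
    have m1 := (hmarg a ha).1
    have m2 := (hmarg a' ha').1
    have m3 := (hmarg a ha).2.2.1
    have m4 := (hmarg a' ha').2.2.1
    constructor <;> linarith
  have key2 : ∀ w ∈ Icc (0:ℝ) 1, ∀ a ∈ Icc (0:ℝ) 1, ∀ a' ∈ Icc (0:ℝ) 1,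
      a ≤ a' → C w a ≤ C w a' ∧ C w a' - C w a ≤ a' - a := by
    intro w hw a ha a' ha' hle
    have e1 := h2 0 w a a' h01 hw ha ha' hw.1 hle
    have e2 := h2 w 1 a a' hw h11 ha ha' hw.2 hle
    have m1 := (hmarg a ha).2.1
    have m2 := (hmarg a' ha').2.1
    have m3 := (hmarg a ha).2.2.2
    have m4 := (hmarg a' ha').2.2.2
    constructor <;> linarith
  have l1 : |C u v - C u' v| ≤ |u - u'| := by
    rcases le_total u u' with h | h
    · obtain ⟨o1, o2⟩ := key1 u hu u' hu' v hv h
      have habs : |u - u'| = u' - u := by rw [abs_sub_comm]; exact abs_of_nonneg (by linarith)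
      rw [habs, abs_sub_le_iff]; constructor <;> linarith
    · obtain ⟨o1, o2⟩ := key1 u' hu' u hu v hv h
      have habs : |u - u'| = u - u' := abs_of_nonneg (by linarith)
      rw [habs, abs_sub_le_iff]; constructor <;> linarith
  have l2 : |C u' v - C u' v'| ≤ |v - v'| := by
    rcases le_total v v' with h | h
    · obtain ⟨o1, o2⟩ := key2 u' hu' v hv v' hv' h
      have habs : |v - v'| = v' - v := by rw [abs_sub_comm]; exact abs_of_nonneg (by linarith)
      rw [habs, abs_sub_le_iff]; constructor <;> linarith
    · obtain ⟨o1, o2⟩ := key2 u' hu' v' hv' v hv h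
      have habs : |v - v'| = v - v' := abs_of_nonneg (by linarith)
      rw [habs, abs_sub_le_iff]; constructor <;> linarith
  calc |C u v - C u' v'| ≤ |C u v - C u' v| + |C u' v - C u' v'| := abs_sub_le _ _ _
    _ ≤ |u - u'| + |v - v'| := add_le_add l1 l2

private lemma cop_le_min {C : ℝ → ℝ → ℝ} (hC : IsCopula C) {u v : ℝ}
    (hu : u ∈ Icc (0:ℝ) 1) (hv : v ∈ Icc (0:ℝ) 1) : C u v ≤ min u v := by
  obtain ⟨hbox, hmarg, h2⟩ := hC
  have h01 : (0:ℝ) ∈ Icc (0:ℝ) 1 := ⟨le_refl 0, zero_le_one⟩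
  have h11 : (1:ℝ) ∈ Icc (0:ℝ) 1 := ⟨zero_le_one, le_refl 1⟩
  have e1 := h2 u 1 0 v hu h11 h01 hv hu.2 hv.1
  have e2 := h2 0 u v 1 h01 hu hv h11 hu.1 hv.2
  have m1 := (hmarg 0 h01).2.2.2  -- C 1 0 = 0
  have m2 := (hmarg u hu).1       -- C u 0 = 0
  have m3 := (hmarg v hv).2.2.2   -- C 1 v = v
  have m4 := (hmarg u hu).2.2.1   -- C u 1 = u
  have m5 := (hmarg 1 h11).2.1    -- C 0 1 = 0
  have m6 := (hmarg v hv).2.1     -- C 0 v = 0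
  exact le_min (by linarith) (by linarith)

theorem path_tail_dependence_coefficients (C Λ : ℝ → ℝ → ℝ)
    (hC : IsCopula C) (hΛ : HasTDF C Λ)
    (φ : ℝ → ℝ) (hrange : ∀ p ∈ Icc (0:ℝ) 1, p ^ 2 ≤ φ p ∧ φ p ≤ 1)
    (hcont : ∃ ε : ℝ, 0 < ε ∧ ContinuousOn φ (Ico 0 ε))
    (b : ℝ) (hb0 : 0 < b)
    (hb : Tendsto (fun p => φ p / p) (nhdsWithin (0:ℝ) (Ioi 0)) (nhds b)) :
    Tendsto (fun p => C (φ p) (p ^ 2 / φ p) / p)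
      (nhdsWithin (0:ℝ) (Ioi 0)) (nhds (Λ b (1 / b))) ∧
    Tendsto (fun p => C (φ p) (p ^ 2 / φ p) / min (φ p) (p ^ 2 / φ p))
      (nhdsWithin (0:ℝ) (Ioi 0)) (nhds (Λ b (1 / b) / min b (1 / b))) ∧
    0 ≤ Λ b (1 / b) ∧ Λ b (1 / b) ≤ Λ b (1 / b) / min b (1 / b) ∧
    Λ b (1 / b) / min b (1 / b) ≤ 1 := by
  have hb0' : 0 < 1 / b := one_div_pos.mpr hb0
  set l := nhdsWithin (0:ℝ) (Ioi 0) with hl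
  set δ : ℝ := min 1 (min b (1 / b)) with hδ
  have hδ0 : 0 < δ := lt_min one_pos (lt_min hb0 hb0')
  have hev : ∀ᶠ p in l, p ∈ Ioo (0:ℝ) δ := by
    rw [hl]; exact Ioo_mem_nhdsGT_of_mem ⟨le_refl 0, hδ0⟩
  -- pointwise facts on (0, δ)
  have facts : ∀ p ∈ Ioo (0:ℝ) δ, φ p ∈ Icc (0:ℝ) 1 ∧ p ^ 2 / φ p ∈ Icc (0:ℝ) 1 ∧
      0 < φ p ∧ 0 < p ^ 2 / φ p ∧ p * b ∈ Icc (0:ℝ) 1 ∧ p * (1 / b) ∈ Icc (0:ℝ) 1 := by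
    intro p hp
    have hp0 : 0 < p := hp.1
    have hpδ : p < δ := hp.2
    have hp1 : p ≤ 1 := le_of_lt (lt_of_lt_of_le hpδ (min_le_left _ _))
    have hpb : p ≤ b :=
      le_of_lt (lt_of_lt_of_le hpδ (le_trans (min_le_right _ _) (min_le_left _ _)))
    have hpib : p ≤ 1 / b :=
      le_of_lt (lt_of_lt_of_le hpδ (le_trans (min_le_right _ _) (min_le_right _ _)))
    obtain ⟨hr1, hr2⟩ := hrange p ⟨hp0.le, hp1⟩
    have hφ0 : 0 < φ p := lt_of_lt_of_le (by positivity) hr1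
    refine ⟨⟨hφ0.le, hr2⟩, ⟨by positivity, (div_le_one hφ0).mpr hr1⟩, hφ0, by positivity,
      ⟨by positivity, ?_⟩, ⟨by positivity, ?_⟩⟩
    · calc p * b ≤ (1 / b) * b := mul_le_mul_of_nonneg_right hpib hb0.le
        _ = 1 := by field_simp
    · calc p * (1 / b) ≤ b * (1 / b) := mul_le_mul_of_nonneg_right hpb hb0'.le
        _ = 1 := by field_simp
  have h2' : Tendsto (fun p => p / φ p) l (nhds (1 / b)) := by
    simpa [inv_div, one_div] using hb.inv₀ hb0.ne'
  -- the difference tends to zero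
  have hdiff : Tendsto (fun p => (C (φ p) (p ^ 2 / φ p) - C (p * b) (p * (1 / b))) / p)
      l (nhds 0) := by
    have hg : Tendsto (fun p => |φ p / p - b| + |p / φ p - 1 / b|) l (nhds 0) := by
      have := ((hb.sub_const b).abs).add ((h2'.sub_const (1 / b)).abs)
      simpa using this
    apply squeeze_zero_norm' _ hg
    filter_upwards [hev] with p hp
    obtain ⟨hφI, hqI, hφ0, hq0, hpbI, hpibI⟩ := facts p hp
    have hp0 : 0 < p := hp.1
    have hL := cop_lip_s17 hC hφI hpbI hqI hpibI
    have e1 : |φ p / p - b| = |φ p - p * b| / p := by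
      rw [show φ p / p - b = (φ p - p * b) / p by field_simp, abs_div, abs_of_pos hp0]
    have e2 : |p / φ p - 1 / b| = |p ^ 2 / φ p - p * (1 / b)| / p := by
      rw [show p / φ p - 1 / b = (p ^ 2 / φ p - p * (1 / b)) / p by field_simp,
        abs_div, abs_of_pos hp0]
    rw [Real.norm_eq_abs, abs_div, abs_of_pos hp0, e1, e2, ← add_div]
    gcongr
  have hΛb := hΛ b (1 / b) hb0.le hb0'.le
  have hχ : Tendsto (fun p => C (φ p) (p ^ 2 / φ p) / p) l (nhds (Λ b (1 / b))) := by
    have := hdiff.add hΛb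
    rw [zero_add] at this
    exact this.congr (fun p => by ring)
  have hmin : Tendsto (fun p => min (φ p) (p ^ 2 / φ p) / p) l (nhds (min b (1 / b))) := by
    apply (hb.min h2').congr'
    filter_upwards [hev] with p hp
    obtain ⟨hφI, hqI, hφ0, hq0, hpbI, hpibI⟩ := facts p hp
    have hp0 : 0 < p := hp.1
    have h1 : p / φ p = (p ^ 2 / φ p) / p := by field_simp
    rw [h1]
    exact min_div_div_right hp0.le _ _
  have hm0 : 0 < min b (1 / b) := lt_min hb0 hb0'
  have hκ : Tendsto (fun p => C (φ p) (p ^ 2 / φ p) / min (φ p) (p ^ 2 / φ p)) l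
      (nhds (Λ b (1 / b) / min b (1 / b))) := by
    apply (hχ.div hmin hm0.ne').congr'
    filter_upwards [hev] with p hp
    obtain ⟨hφI, hqI, hφ0, hq0, hpbI, hpibI⟩ := facts p hp
    have hp0 : p ≠ 0 := hp.1.ne'
    have hmne : min (φ p) (p ^ 2 / φ p) ≠ 0 := (lt_min hφ0 hq0).ne'
    simp only [Pi.div_apply]
    field_simp
  have hm1 : min b (1 / b) ≤ 1 := by
    rcases le_total b 1 with h | h
    · exact le_trans (min_le_left _ _) h
    · exact le_trans (min_le_right _ _) (by rw [div_le_one hb0]; linarith)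
  have hχ0 : 0 ≤ Λ b (1 / b) := by
    apply ge_of_tendsto hχ
    filter_upwards [hev] with p hp
    obtain ⟨hφI, hqI, hφ0, hq0, hpbI, hpibI⟩ := facts p hp
    have := (hC.1 (φ p) hφI (p ^ 2 / φ p) hqI).1
    exact div_nonneg this hp.1.le
  have hκ1 : Λ b (1 / b) / min b (1 / b) ≤ 1 := by
    apply le_of_tendsto hκ
    filter_upwards [hev] with p hp
    obtain ⟨hφI, hqI, hφ0, hq0, hpbI, hpibI⟩ := facts p hp
    exact (div_le_one (lt_min hφ0 hq0)).mpr (cop_le_min hC hφI hqI)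
  have hmid : Λ b (1 / b) ≤ Λ b (1 / b) / min b (1 / b) := by
    rw [le_div_iff₀ hm0]
    nlinarith
  exact ⟨hχ, hκ, hχ0, hmid, hκ1⟩
end
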